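/- arXiv:0804.2585 — 12 statements merged into one kernel-verified Lean document; each statement's English description precedes it below -/
import Mathlib

section
/- In the ring of formal power series in u over the polynomial ring ℚ[x_1, x_2, …], one has exp(Σ_{n≥1} ((−1)^{n+1}/n) x_n u^n) = Σ_{n≥0} P_n(x_1,…,x_n) u^n, where P_n are the Kailath–Segall polynomials. -/
/-- The Kailath–Segall polynomials, defined by `P₀ = 1` and the recurrence
`Pₙ = (1/n)(Pₙ₋₁ x₁ − Pₙ₋₂ x₂ + ⋯ + (−1)^{n+1} P₀ xₙ)`, evaluated at a
sequence `x` (indexed from 1) in a commutative `ℚ`-algebra. -/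
noncomputable def KS {A : Type*} [CommRing A] [Algebra ℚ A] (x : ℕ → A) : ℕ → A
  | 0 => 1
  | n + 1 =>
      (((n : ℚ) + 1)⁻¹) •
        ∑ j ∈ Finset.range (n + 1), ((-1 : A) ^ j * KS x (n - j) * x (j + 1))
  termination_by n => n
  decreasing_by omega

/-- The exponential of a formal power series with zero constant term:
`exp f = Σ_k f^k / k!`; for each `n`, only the terms with `k ≤ n` contribute
to the `n`-th coefficient. -/
noncomputable def psExp {A : Type*} [CommRing A] [Algebra ℚ A]
    (f : PowerSeries A) : PowerSeries A :=
  PowerSeries.mk fun n =>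
    ∑ k ∈ Finset.range (n + 1), ((k.factorial : ℚ))⁻¹ • PowerSeries.coeff n (f ^ k)

section Aux

open PowerSeries Finset

variable {A : Type*} [CommRing A] [Algebra ℚ A]

lemma KS_coeff_pow_eq_zero {f : PowerSeries A} (hf : constantCoeff f = 0)
    {d m : ℕ} (h : d < m) : coeff d (f ^ m) = 0 := by
  induction m generalizing d with
  | zero => omega
  | succ m ih =>
    rw [pow_succ, mul_comm, coeff_mul]
    apply Finset.sum_eq_zero
    rintro ⟨i, j⟩ hij
    rw [Finset.HasAntidiagonal.mem_antidiagonal] at hij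
    rcases Nat.eq_zero_or_pos i with hi | hi
    · subst hi
      simp only [coeff_zero_eq_constantCoeff, hf, zero_mul]
    · have : j < m := by omega
      rw [ih this, mul_zero]

lemma KS_nsmul_coeff (f : PowerSeries A) (n m : ℕ) :
    ((n : ℚ) + 1) • coeff (n + 1) (f ^ m) =
      coeff n (PowerSeries.derivative (R := A) (f ^ m)) := by
  rw [coeff_derivative, Algebra.smul_def]
  push_cast
  ring

lemma KS_psExp_key {f : PowerSeries A} (hf : constantCoeff f = 0) (n : ℕ) :
    ((n : ℚ) + 1) • coeff (n + 1) (psExp f) =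
      ∑ j ∈ Finset.range (n + 1),
        ((((j : ℚ) + 1) • coeff (j + 1) f) * coeff (n - j) (psExp f)) := by
  have h1 : ((n : ℚ) + 1) • coeff (n + 1) (psExp f) =
      ∑ k ∈ Finset.range (n + 2),
        (((k : ℚ)) / k.factorial) •
          coeff n (f ^ (k - 1) * PowerSeries.derivative (R := A) f) := by
    rw [psExp, coeff_mk, Finset.smul_sum]
    refine Finset.sum_congr rfl fun k _ => ?_
    rw [smul_comm, KS_nsmul_coeff, Derivation.leibniz_pow, smul_eq_mul, map_nsmul,
      ← Nat.cast_smul_eq_nsmul ℚ, smul_smul]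
    congr 1
    rw [div_eq_mul_inv, mul_comm]
  have h2 : ∀ i : ℕ, (((i + 1 : ℕ) : ℚ)) / ((i + 1).factorial : ℚ) =
      ((i.factorial : ℚ))⁻¹ := by
    intro i
    rw [Nat.factorial_succ, Nat.cast_mul]
    rw [div_mul_eq_div_div, div_self (by positivity), one_div]
  rw [h1, Finset.sum_range_succ']
  simp only [h2, Nat.add_sub_cancel, Nat.cast_zero, zero_div, zero_smul, add_zero]
  have h3 : ∀ m : ℕ, coeff n (f ^ m * PowerSeries.derivative (R := A) f) =
      ∑ j ∈ Finset.range (n + 1),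
        coeff j (PowerSeries.derivative (R := A) f) * coeff (n - j) (f ^ m) := by
    intro m
    rw [mul_comm, coeff_mul, Finset.Nat.sum_antidiagonal_eq_sum_range_succ_mk]
  simp only [h3, Finset.smul_sum]
  rw [Finset.sum_comm]
  refine Finset.sum_congr rfl fun j hj => ?_
  have hj' : j ≤ n := by simpa [Nat.lt_succ_iff] using hj
  have h4 : ∀ m : ℕ,
      ((m.factorial : ℚ))⁻¹ •
          (coeff j (PowerSeries.derivative (R := A) f) * coeff (n - j) (f ^ m)) =
        coeff j (PowerSeries.derivative (R := A) f) *
          (((m.factorial : ℚ))⁻¹ • coeff (n - j) (f ^ m)) := by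
    intro m
    rw [mul_smul_comm]
  simp only [h4]
  rw [← Finset.mul_sum]
  have h5 : ∑ m ∈ Finset.range (n + 1), ((m.factorial : ℚ))⁻¹ • coeff (n - j) (f ^ m) =
      coeff (n - j) (psExp f) := by
    rw [psExp, coeff_mk]
    refine (Finset.sum_subset (Finset.range_subset_range.mpr (by omega)) ?_).symm
    intro m hm hm'
    rw [Finset.mem_range] at hm hm'
    rw [KS_coeff_pow_eq_zero hf (by omega), smul_zero]
  rw [h5, coeff_derivative, Algebra.smul_def]
  push_cast
  ring

end Aux

/-- In `ℚ[x₁, x₂, …][[u]]`,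
`exp(Σ_{n≥1} ((−1)^{n+1}/n) xₙ uⁿ) = Σ_{n≥0} Pₙ(x₁,…,xₙ) uⁿ`. -/
theorem kailathSegall_generating_function :
    psExp (PowerSeries.mk fun n =>
        if n = 0 then (0 : MvPolynomial ℕ ℚ)
        else ((-1 : ℚ) ^ (n + 1) / n) • MvPolynomial.X n) =
      PowerSeries.mk fun n => KS MvPolynomial.X n := by
  set A := MvPolynomial ℕ ℚ
  set f : PowerSeries A := PowerSeries.mk fun n =>
      if n = 0 then (0 : A) else ((-1 : ℚ) ^ (n + 1) / n) • MvPolynomial.X n with hfdef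
  have hf : PowerSeries.constantCoeff f = 0 := by
    rw [← PowerSeries.coeff_zero_eq_constantCoeff, hfdef, PowerSeries.coeff_mk]
    simp
  have main : ∀ n, PowerSeries.coeff n (psExp f) = KS MvPolynomial.X n := by
    intro n
    induction n using Nat.strong_induction_on with
    | _ n ih =>
      match n with
      | 0 =>
        rw [psExp, PowerSeries.coeff_mk, KS]
        simp
      | Nat.succ n =>
        have key := KS_psExp_key hf n
        have hne : ((n : ℚ) + 1) ≠ 0 := by positivity
        rw [show PowerSeries.coeff (n + 1) (psExp f) =
            ((n : ℚ) + 1)⁻¹ • (((n : ℚ) + 1) • PowerSeries.coeff (n + 1) (psExp f)) by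
          rw [inv_smul_smul₀ hne], key, KS]
        congr 1
        refine Finset.sum_congr rfl fun j hj => ?_
        rw [ih (n - j) (by omega), hfdef, PowerSeries.coeff_mk,
          if_neg (Nat.succ_ne_zero j), smul_smul]
        have hsc : ((j : ℚ) + 1) * ((-1 : ℚ) ^ (j + 1 + 1) / ((j + 1 : ℕ) : ℚ)) =
            (-1 : ℚ) ^ j := by
          push_cast
          have : ((j : ℚ) + 1) ≠ 0 := by positivity
          field_simp
          ring
        rw [hsc, Algebra.smul_def, map_pow, map_neg, map_one]
        ring
  ext n
  rw [main n, PowerSeries.coeff_mk]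
end

section
/- For every n ≥ 1, the Kailath–Segall polynomial satisfies the explicit formula P_n(x_1,…,x_n) = (−1)^n Σ ∏_{j=1}^n (−x_j)^{m_j} / (j^{m_j} · m_j!), where the summation is over all tuples of nonnegative integers (m_1,…,m_n) with Σ_{j=1}^n j·m_j = n. -/
open Finset MvPolynomial

namespace KSExp


abbrev R : Type := MvPolynomial ℕ ℚ

noncomputable def c (j k : ℕ) : R :=
  (((j : ℚ) + 1) ^ k * (k.factorial : ℚ))⁻¹ • (-(MvPolynomial.X (j + 1) : R)) ^ k

lemma c_zero (j : ℕ) : c j 0 = 1 := by simp [c]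

def Fs (n s : ℕ) : Finset (Fin n → ℕ) :=
  Finset.filter (fun m : Fin n → ℕ => ∑ j, (j.1 + 1) * m j = s)
    (Fintype.piFinset fun _ : Fin n => Finset.range (n + 1))

noncomputable def Tb (N b n : ℕ) : R :=
  ∑ m ∈ Finset.filter (fun m : Fin N → ℕ => ∑ j, (j.1 + 1) * m j = n)
      (Fintype.piFinset fun _ : Fin N => Finset.range (b + 1)),
    ∏ j : Fin N, c j.1 (m j)

lemma Tb_eq_Fs (n s : ℕ) : Tb n n s = ∑ m ∈ Fs n s, ∏ i, c i.1 (m i) := rfl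

lemma Tb_zero (b : ℕ) : Tb 0 b 0 = 1 := by
  simp [Tb]

lemma c_succ (j k : ℕ) :
    (((j : ℚ) + 1) * ((k : ℚ) + 1)) • c j (k + 1)
      = (-(MvPolynomial.X (j + 1) : R)) * c j k := by
  have h1 : ((j : ℚ) + 1) ≠ 0 := by positivity
  have h2 : ((k : ℚ) + 1) ≠ 0 := by positivity
  have h3 : ((k.factorial : ℚ)) ≠ 0 := by exact_mod_cast k.factorial_ne_zero
  have h4 : ((j : ℚ) + 1) ^ k ≠ 0 := pow_ne_zero _ h1
  simp only [c, Nat.factorial_succ, smul_smul, pow_succ']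
  rw [mul_smul_comm]
  congr 1
  push_cast
  field_simp

lemma wsum_update {n : ℕ} (m : Fin n → ℕ) (j : Fin n) (v : ℕ) :
    ∑ i, (i.1 + 1) * (Function.update m j v i)
      = (j.1 + 1) * v + ∑ i ∈ univ \ {j}, (i.1 + 1) * m i := by
  have he : (fun i => (i.1 + 1) * Function.update m j v i)
      = Function.update (fun i : Fin n => (i.1 + 1) * m i) j ((j.1 + 1) * v) := by
    funext i
    rcases eq_or_ne i j with rfl | hij
    · simp
    · simp [Function.update_of_ne hij]
  calc ∑ i, (i.1 + 1) * (Function.update m j v i)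
      = ∑ i, Function.update (fun i : Fin n => (i.1 + 1) * m i) j ((j.1 + 1) * v) i := by
        rw [he]
    _ = _ := Finset.sum_update_of_mem (mem_univ j) _ _

lemma wsum_split {n : ℕ} (m : Fin n → ℕ) (j : Fin n) :
    ∑ i, (i.1 + 1) * m i = (j.1 + 1) * m j + ∑ i ∈ univ \ {j}, (i.1 + 1) * m i :=
  Finset.sum_eq_add_sum_sdiff_singleton_of_mem (mem_univ j) _

lemma prod_update {n : ℕ} (m : Fin n → ℕ) (j : Fin n) (v : ℕ) :
    ∏ i, c i.1 (Function.update m j v i)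
      = c j.1 v * ∏ i ∈ univ \ {j}, c i.1 (m i) := by
  rw [Finset.prod_eq_mul_prod_sdiff_singleton_of_mem (mem_univ j)]
  rw [Function.update_self]
  congr 1
  refine Finset.prod_congr rfl fun i hi => ?_
  rw [Function.update_of_ne (by simpa using (mem_sdiff.1 hi).2)]

lemma key (n : ℕ) (j : Fin n) :
    ∑ m ∈ Fs n n, (((j.1 + 1) * m j : ℕ) : ℚ) • ∏ i, c i.1 (m i)
      = (-(MvPolynomial.X (j.1 + 1) : R)) * ∑ m ∈ Fs n (n - 1 - j.1), ∏ i, c i.1 (m i) := by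
  classical
  have hjn : j.1 < n := j.2
  rw [Finset.mul_sum]
  have h0 : ∀ m ∈ Fs n n,
      ((((j.1 + 1) * m j : ℕ) : ℚ) • ∏ i, c i.1 (m i)) ≠ 0 → m j ≠ 0 := by
    intro m _ h hmj
    apply h
    simp [hmj]
  rw [← Finset.sum_filter_of_ne h0]
  refine Finset.sum_nbij' (i := fun m => Function.update m j (m j - 1))
    (j := fun m' => Function.update m' j (m' j + 1)) ?_ ?_ ?_ ?_ ?_
  · -- maps into
    intro m hm
    simp only [mem_filter, Fs, Fintype.mem_piFinset, mem_range] at hm ⊢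
    obtain ⟨⟨h1, h2⟩, h3⟩ := hm
    obtain ⟨k, hk⟩ : ∃ k, m j = k + 1 := ⟨m j - 1, by omega⟩
    refine ⟨fun i => ?_, ?_⟩
    · rcases eq_or_ne i j with rfl | hij
      · rw [Function.update_self]; have := h1 i; omega
      · rw [Function.update_of_ne hij]; exact h1 i
    · rw [wsum_update]
      rw [wsum_split m j] at h2
      have hexp : (j.1 + 1) * (k + 1) = (j.1 + 1) * k + (j.1 + 1) := by ring
      rw [hk] at h2
      rw [hk]
      simp only [Nat.add_sub_cancel]
      omega
  · -- maps back
    intro m' hm'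
    simp only [mem_filter, Fs, Fintype.mem_piFinset, mem_range] at hm' ⊢
    obtain ⟨h1, h2⟩ := hm'
    have hb : (j.1 + 1) * m' j ≤ n - 1 - j.1 := by
      rw [wsum_split m' j] at h2; omega
    have hmj : m' j ≤ n - 1 - j.1 := le_trans (Nat.le_mul_of_pos_left _ (Nat.succ_pos _)) hb
    refine ⟨⟨fun i => ?_, ?_⟩, ?_⟩
    · rcases eq_or_ne i j with rfl | hij
      · rw [Function.update_self]; omega
      · rw [Function.update_of_ne hij]; exact h1 i
    · rw [wsum_update]
      rw [wsum_split m' j] at h2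
      have hexp : (j.1 + 1) * (m' j + 1) = (j.1 + 1) * m' j + (j.1 + 1) := by ring
      omega
    · simp
  · -- left inverse
    intro m hm
    simp only [mem_filter, Fs] at hm
    have h3 : m j ≠ 0 := hm.2
    funext i
    rcases eq_or_ne i j with rfl | hij
    · simp only [Function.update_self]
      omega
    · simp only [Function.update_of_ne hij]
  · -- right inverse
    intro m' _
    funext i
    rcases eq_or_ne i j with rfl | hij
    · simp only [Function.update_self, Nat.add_sub_cancel]
    · simp only [Function.update_of_ne hij]
  · -- values
    intro m hm
    simp only [mem_filter, Fs] at hm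
    obtain ⟨⟨_, _⟩, h3⟩ := hm
    obtain ⟨k, hk⟩ : ∃ k, m j = k + 1 := ⟨m j - 1, by omega⟩
    rw [Finset.prod_eq_mul_prod_sdiff_singleton_of_mem (mem_univ j) (fun i => c i.1 (m i))]
    rw [prod_update, hk]
    simp only [Nat.add_sub_cancel]
    have hc : (((j.1 + 1) * (k + 1) : ℕ) : ℚ) = ((j.1 : ℚ) + 1) * ((k : ℚ) + 1) := by
      push_cast; ring
    rw [hc, ← smul_mul_assoc, c_succ, mul_assoc]


lemma Tb_main (n : ℕ) :
    (n : ℚ) • Tb n n n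
      = ∑ j : Fin n, (-(MvPolynomial.X (j.1 + 1) : R)) * Tb n n (n - 1 - j.1) := by
  rw [Tb_eq_Fs, Finset.smul_sum]
  have step : ∀ m ∈ Fs n n, (n : ℚ) • ∏ i, c i.1 (m i)
      = ∑ j : Fin n, (((j.1 + 1) * m j : ℕ) : ℚ) • ∏ i, c i.1 (m i) := by
    intro m hm
    have hc : ∑ j : Fin n, (j.1 + 1) * m j = n := (Finset.mem_filter.1 hm).2
    calc (n : ℚ) • ∏ i, c i.1 (m i)
        = ((∑ j : Fin n, (j.1 + 1) * m j : ℕ) : ℚ) • ∏ i, c i.1 (m i) := by rw [hc]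
      _ = ∑ j : Fin n, (((j.1 + 1) * m j : ℕ) : ℚ) • ∏ i, c i.1 (m i) := by
          rw [Nat.cast_sum, Finset.sum_smul]
  rw [Finset.sum_congr rfl step, Finset.sum_comm]
  refine Finset.sum_congr rfl fun j _ => ?_
  rw [Tb_eq_Fs]
  exact key n j

lemma cond_bound {N n : ℕ} {m : Fin N → ℕ} (h : ∑ j, (j.1 + 1) * m j = n) (j : Fin N) :
    m j ≤ n := by
  calc m j ≤ (j.1 + 1) * m j := Nat.le_mul_of_pos_left _ (Nat.succ_pos _)
  _ ≤ ∑ i, (i.1 + 1) * m i := Finset.single_le_sum (f := fun i : Fin N => (i.1 + 1) * m i) (fun i _ => Nat.zero_le _) (mem_univ j)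
  _ = n := h

lemma Tb_box {N b b' n : ℕ} (hb : n ≤ b) (hb' : n ≤ b') : Tb N b n = Tb N b' n := by
  unfold Tb
  apply Finset.sum_congr _ (fun _ _ => rfl)
  ext m
  simp only [mem_filter, Fintype.mem_piFinset, mem_range, Nat.lt_succ_iff]
  constructor <;> rintro ⟨h1, h2⟩
  · exact ⟨fun j => le_trans (cond_bound h2 j) hb', h2⟩
  · exact ⟨fun j => le_trans (cond_bound h2 j) hb, h2⟩


lemma snoc_sum {N : ℕ} (m : Fin (N + 1) → ℕ) :
    ∑ j : Fin (N + 1), (j.1 + 1) * m j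
      = (∑ j : Fin N, (j.1 + 1) * m j.castSucc) + (N + 1) * m (Fin.last N) := by
  rw [Fin.sum_univ_castSucc]
  simp [Fin.coe_castSucc, Fin.val_last]

lemma mem_last_zero {N n : ℕ} (hn : n ≤ N) (m : Fin (N + 1) → ℕ)
    (h2 : ∑ j : Fin (N + 1), (j.1 + 1) * m j = n) : m (Fin.last N) = 0 := by
  rw [snoc_sum] at h2
  by_contra h
  have h1 : 1 ≤ m (Fin.last N) := Nat.one_le_iff_ne_zero.2 h
  have : N + 1 ≤ (N + 1) * m (Fin.last N) := Nat.le_mul_of_pos_right _ h1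
  omega

lemma Tb_succ {N b n : ℕ} (hn : n ≤ N) : Tb (N + 1) b n = Tb N b n := by
  unfold Tb
  refine Finset.sum_nbij' (i := fun m => Fin.init m) (j := fun m => Fin.snoc m 0)
    ?_ ?_ ?_ ?_ ?_
  · intro m hm
    simp only [mem_filter, Fintype.mem_piFinset, mem_range] at hm ⊢
    obtain ⟨h1, h2⟩ := hm
    have hlast := mem_last_zero hn m h2
    rw [snoc_sum, hlast, mul_zero, add_zero] at h2
    exact ⟨fun j => h1 _, h2⟩
  · intro m hm
    simp only [mem_filter, Fintype.mem_piFinset, mem_range] at hm ⊢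
    obtain ⟨h1, h2⟩ := hm
    constructor
    · intro j
      induction j using Fin.lastCases with
      | last => simp only [Fin.snoc_last]; omega
      | cast j => simpa using h1 j
    · rw [snoc_sum]
      simp only [Fin.snoc_last, Fin.snoc_castSucc, mul_zero, add_zero]
      exact h2
  · intro m hm
    simp only [mem_filter, Fintype.mem_piFinset, mem_range] at hm
    obtain ⟨h1, h2⟩ := hm
    have hlast := mem_last_zero hn m h2
    funext j
    induction j using Fin.lastCases with
    | last => simpa [Fin.snoc_last] using hlast.symm
    | cast j => simp [Fin.snoc_castSucc, Fin.init]
  · intro m hm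
    funext j
    simp [Fin.init, Fin.snoc_castSucc]
  · intro m hm
    simp only [mem_filter, Fintype.mem_piFinset, mem_range] at hm
    obtain ⟨h1, h2⟩ := hm
    have hlast := mem_last_zero hn m h2
    rw [Fin.prod_univ_castSucc]
    simp [Fin.init, hlast, c_zero, Fin.val_last]

lemma Tb_domain {b n : ℕ} : ∀ {M N : ℕ}, n ≤ N → N ≤ M → Tb M b n = Tb N b n := by
  intro M N h1 h2
  induction M, h2 using Nat.le_induction with
  | base => rfl
  | succ M hM ih => rw [Tb_succ (le_trans h1 hM), ih]



lemma KS_eq (n : ℕ) : KS (MvPolynomial.X : ℕ → R) n = (-1 : R) ^ n * Tb n n n := by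
  induction n using Nat.strong_induction_on with
  | _ n ih =>
    match n with
    | 0 => rw [KS]; simp [Tb_zero]
    | k + 1 =>
      rw [KS]
      have hsum : ∀ j ∈ Finset.range (k + 1),
          (-1 : R) ^ j * KS (MvPolynomial.X : ℕ → R) (k - j) * MvPolynomial.X (j + 1)
            = (-1 : R) ^ k * (Tb (k + 1) (k + 1) (k - j) * MvPolynomial.X (j + 1)) := by
        intro j hj
        rw [ih (k - j) (by omega)]
        have hjk : j ≤ k := by simpa [Nat.lt_succ_iff] using hj
        have hT : Tb (k - j) (k - j) (k - j) = Tb (k + 1) (k + 1) (k - j) := by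
          rw [Tb_box (le_refl (k - j)) (show k - j ≤ k + 1 by omega)]
          exact (Tb_domain (le_refl (k - j)) (by omega)).symm
        rw [hT]
        have hsgn : (-1 : R) ^ j * (-1 : R) ^ (k - j) = (-1 : R) ^ k := by
          rw [← pow_add]; congr 1; omega
        calc (-1 : R) ^ j * ((-1 : R) ^ (k - j) * Tb (k + 1) (k + 1) (k - j))
              * MvPolynomial.X (j + 1)
            = ((-1 : R) ^ j * (-1 : R) ^ (k - j))
              * (Tb (k + 1) (k + 1) (k - j) * MvPolynomial.X (j + 1)) := by ring
          _ = _ := by rw [hsgn]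
      rw [Finset.sum_congr rfl hsum, ← Finset.mul_sum]
      have hmain := Tb_main (k + 1)
      have hcast : (((k + 1 : ℕ) : ℚ)) = (k : ℚ) + 1 := by push_cast; ring
      rw [hcast] at hmain
      have h2 : ∑ j ∈ Finset.range (k + 1),
          Tb (k + 1) (k + 1) (k - j) * MvPolynomial.X (j + 1)
            = -(((k : ℚ) + 1) • Tb (k + 1) (k + 1) (k + 1)) := by
        rw [hmain]
        rw [← Fin.sum_univ_eq_sum_range
          (fun j => Tb (k + 1) (k + 1) (k - j) * MvPolynomial.X (j + 1)) (k + 1)]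
        rw [← Finset.sum_neg_distrib]
        refine Finset.sum_congr rfl fun j _ => ?_
        have : k + 1 - 1 - j.1 = k - j.1 := by omega
        rw [this]
        ring
      rw [h2]
      have hne : ((k : ℚ) + 1) ≠ 0 := by positivity
      rw [mul_neg, smul_neg, mul_smul_comm, smul_smul, inv_mul_cancel₀ hne, one_smul,
        pow_succ]
      ring

end KSExp

/-- Explicit formula for the Kailath–Segall polynomials:
`Pₙ(x₁,…,xₙ) = (−1)ⁿ Σ ∏_{j=1}^n (−x_j)^{m_j} / (j^{m_j} m_j!)`,
the sum being over all nonnegative integer tuples `(m₁,…,mₙ)` with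
`Σ_j j·m_j = n` (all such tuples satisfy `m_j ≤ n`, so the sum over the
box `{0,…,n}ⁿ` filtered by the constraint captures them all). -/
theorem kailathSegall_explicit (n : ℕ) (hn : 1 ≤ n) :
    KS (MvPolynomial.X : ℕ → MvPolynomial ℕ ℚ) n =
      (-1 : MvPolynomial ℕ ℚ) ^ n *
        ∑ m ∈ Finset.filter (fun m : Fin n → ℕ => ∑ j, (j.1 + 1) * m j = n)
            (Fintype.piFinset fun _ : Fin n => Finset.range (n + 1)),
          ∏ j : Fin n,
            ((((j.1 + 1 : ℚ)) ^ (m j) * ((m j).factorial : ℚ))⁻¹) •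
              (-(MvPolynomial.X (j.1 + 1) : MvPolynomial ℕ ℚ)) ^ (m j) := by
  rw [KSExp.KS_eq n]
  rfl
end

section
/- For every n ≥ 0, the identity P_n(x_1 + y_1, …, x_n + y_n) = Σ_{k=0}^n P_k(x_1,…,x_k) · P_{n−k}(y_1,…,y_{n−k}) holds in the polynomial ring ℚ[x_1,…,x_n, y_1,…,y_n]. -/
section Aux

variable {A : Type*} [CommRing A] [Algebra ℚ A]

lemma KS_mul (x : ℕ → A) (n : ℕ) :
    ((n : A) + 1) * KS x (n + 1)
      = ∑ j ∈ Finset.range (n + 1), ((-1 : A) ^ j * KS x (n - j) * x (j + 1)) := by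
  have h : ((n : A) + 1) = algebraMap ℚ A ((n : ℚ) + 1) := by push_cast; ring
  rw [KS, h, ← Algebra.smul_def, smul_smul, mul_inv_cancel₀ (by positivity), one_smul]

lemma cancel_succ (n : ℕ) {a b : A} (h : ((n : A) + 1) * a = ((n : A) + 1) * b) : a = b := by
  have h' : ((n : ℚ) + 1) • a = ((n : ℚ) + 1) • b := by
    rw [Algebra.smul_def, Algebra.smul_def]
    simpa using h
  calc a = ((n:ℚ)+1)⁻¹ • (((n:ℚ)+1) • a) := by
        rw [smul_smul, inv_mul_cancel₀ (by positivity), one_smul]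
    _ = ((n:ℚ)+1)⁻¹ • (((n:ℚ)+1) • b) := by rw [h']
    _ = b := by rw [smul_smul, inv_mul_cancel₀ (by positivity), one_smul]

lemma triangle (x y : ℕ → A) (n : ℕ) :
    ∑ k ∈ Finset.range (n + 2), (k : A) * (KS x k * KS y (n + 1 - k))
      = ∑ j ∈ Finset.range (n + 1), ∑ b ∈ Finset.range (n - j + 1),
          (-1 : A) ^ j * KS x b * KS y (n - j - b) * x (j + 1) := by
  rw [Finset.sum_range_succ']
  simp only [Nat.cast_zero, zero_mul, add_zero]
  have step1 : ∀ a ∈ Finset.range (n+1),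
      ((a+1 : ℕ) : A) * (KS x (a+1) * KS y (n+1-(a+1)))
        = ∑ j ∈ Finset.range (a+1), (-1:A)^j * KS x (a-j) * x (j+1) * KS y (n-a) := by
    intro a ha
    have h1 : n + 1 - (a+1) = n - a := by omega
    rw [h1, ← Finset.sum_mul, ← KS_mul x a]
    push_cast
    ring
  rw [Finset.sum_congr rfl step1]
  rw [Finset.sum_comm' (t' := Finset.range (n+1)) (s' := fun j => Finset.Ico j (n+1))
    (by intro a j; simp only [Finset.mem_range, Finset.mem_Ico]; omega)]
  refine Finset.sum_congr rfl fun j hj => ?_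
  rw [Finset.sum_Ico_eq_sum_range]
  simp only [Finset.mem_range] at hj
  rw [show n + 1 - j = n - j + 1 by omega]
  refine Finset.sum_congr rfl fun b hb => ?_
  simp only [Finset.mem_range] at hb
  rw [show j + b - j = b by omega, show n - (j + b) = n - j - b by omega]
  ring

lemma KS_add (x y : ℕ → A) (n : ℕ) :
    KS (fun k => x k + y k) n
      = ∑ k ∈ Finset.range (n + 1), KS x k * KS y (n - k) := by
  induction n using Nat.strong_induction_on with
  | _ n ih =>
  match n with
  | 0 => simp [KS]
  | Nat.succ n =>
    apply cancel_succ n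
    rw [KS_mul]
    have hz : ∀ j ∈ Finset.range (n+1),
        (-1:A)^j * KS (fun k => x k + y k) (n-j) * (x (j+1) + y (j+1))
          = (∑ b ∈ Finset.range (n-j+1), (-1:A)^j * KS x b * KS y (n-j-b) * x (j+1))
          + (∑ b ∈ Finset.range (n-j+1), (-1:A)^j * KS x b * KS y (n-j-b) * y (j+1)) := by
      intro j hj
      rw [ih (n - j) (by omega), Finset.mul_sum, Finset.sum_mul, ← Finset.sum_add_distrib]
      exact Finset.sum_congr rfl fun b hb => by ring
    rw [Finset.sum_congr rfl hz, Finset.sum_add_distrib]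
    have hsplit : ((n:A)+1) * (∑ k ∈ Finset.range (n+1+1), KS x k * KS y (n+1-k))
        = (∑ k ∈ Finset.range (n+2), (k:A) * (KS x k * KS y (n+1-k)))
        + (∑ k ∈ Finset.range (n+2), ((n+1-k : ℕ):A) * (KS x k * KS y (n+1-k))) := by
      rw [Finset.mul_sum, ← Finset.sum_add_distrib]
      refine Finset.sum_congr rfl fun k hk => ?_
      simp only [Finset.mem_range] at hk
      have h1 : ((n:A)+1) = (k:A) + ((n+1-k:ℕ):A) := by
        rw [← Nat.cast_add, show k + (n+1-k) = n + 1 by omega]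
        push_cast; ring
      rw [h1]; ring
    rw [hsplit, triangle x y n]
    congr 1
    have hrefl : ∑ k ∈ Finset.range (n+2), ((n+1-k : ℕ):A) * (KS x k * KS y (n+1-k))
        = ∑ k ∈ Finset.range (n+2), (k:A) * (KS y k * KS x (n+1-k)) := by
      rw [← Finset.sum_range_reflect
        (fun k => ((n+1-k:ℕ):A) * (KS x k * KS y (n+1-k))) (n+2)]
      refine Finset.sum_congr rfl fun k hk => ?_
      simp only [Finset.mem_range] at hk
      rw [show n + 2 - 1 - k = n + 1 - k by omega, show n + 1 - (n+1-k) = k by omega]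
      ring
    rw [hrefl, triangle y x n]
    refine Finset.sum_congr rfl fun j hj => ?_
    simp only [Finset.mem_range] at hj
    rw [← Finset.sum_range_reflect
      (fun b => (-1:A)^j * KS x b * KS y (n-j-b) * y (j+1)) (n-j+1)]
    refine Finset.sum_congr rfl fun b hb => ?_
    simp only [Finset.mem_range] at hb
    rw [show n - j + 1 - 1 - b = n - j - b by omega, show n - j - (n-j-b) = b by omega]
    ring

end Aux

/-- In the polynomial ring with variables `xₖ = X (inl k)`, `yₖ = X (inr k)`:
`Pₙ(x₁+y₁, …, xₙ+yₙ) = Σ_{k=0}^n Pₖ(x₁,…,xₖ) Pₙ₋ₖ(y₁,…,yₙ₋ₖ)`. -/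
theorem kailathSegall_binomial (n : ℕ) :
    KS (fun k => (MvPolynomial.X (Sum.inl k) + MvPolynomial.X (Sum.inr k) :
        MvPolynomial (ℕ ⊕ ℕ) ℚ)) n =
      ∑ k ∈ Finset.range (n + 1),
        KS (fun j => (MvPolynomial.X (Sum.inl j) : MvPolynomial (ℕ ⊕ ℕ) ℚ)) k *
          KS (fun j => (MvPolynomial.X (Sum.inr j) : MvPolynomial (ℕ ⊕ ℕ) ℚ)) (n - k) := by
  exact KS_add (fun j => MvPolynomial.X (Sum.inl j)) (fun j => MvPolynomial.X (Sum.inr j)) n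
end

section
/- For every n ≥ 0, the identity P_n(a x_1 + b y_1, a² x_2 + b² y_2, …, a^n x_n + b^n y_n) = Σ_{k=0}^n a^k b^{n−k} P_k(x_1,…,x_k) · P_{n−k}(y_1,…,y_{n−k}) holds in the polynomial ring ℚ[a, b, x_1,…,x_n, y_1,…,y_n]. -/
lemma KS_rec {A : Type*} [CommRing A] [Algebra ℚ A] (x : ℕ → A) (n : ℕ) :
    ((n : ℚ) + 1) • KS x (n + 1) =
      ∑ j ∈ Finset.range (n + 1), ((-1 : A) ^ j * KS x (n - j) * x (j + 1)) := by
  rw [KS, smul_smul, mul_inv_cancel₀ (by positivity), one_smul]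

lemma tri_swap {A : Type*} [AddCommMonoid A] (n : ℕ) (f g : ℕ → ℕ → A)
    (h : ∀ j k, j + k ≤ n → f j k = g k j) :
    ∑ j ∈ Finset.range (n + 1), ∑ k ∈ Finset.range (n + 1 - j), f j k =
      ∑ i ∈ Finset.range (n + 1), ∑ j ∈ Finset.range (n + 1 - i), g i j := by
  rw [Finset.sum_sigma', Finset.sum_sigma']
  refine Finset.sum_nbij' (fun p => ⟨p.2, p.1⟩) (fun p => ⟨p.2, p.1⟩) ?_ ?_ ?_ ?_ ?_ <;>
    simp only [Finset.mem_sigma, Finset.mem_range] <;> intro p hp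
  · omega
  · omega
  · trivial
  · trivial
  · exact h p.1 p.2 (by omega)

lemma tri_rot {A : Type*} [AddCommMonoid A] (n : ℕ) (f g : ℕ → ℕ → A)
    (h : ∀ j k, j + k ≤ n → f j k = g (n - j - k) j) :
    ∑ j ∈ Finset.range (n + 1), ∑ k ∈ Finset.range (n + 1 - j), f j k =
      ∑ i ∈ Finset.range (n + 1), ∑ j ∈ Finset.range (n + 1 - i), g i j := by
  rw [Finset.sum_sigma', Finset.sum_sigma']
  refine Finset.sum_nbij' (fun p => ⟨n - p.1 - p.2, p.1⟩)
    (fun p => ⟨p.2, n - p.1 - p.2⟩) ?_ ?_ ?_ ?_ ?_ <;>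
    simp only [Finset.mem_sigma, Finset.mem_range] <;> intro p hp
  · omega
  · omega
  · obtain ⟨j, k⟩ := p
    dsimp only at hp
    rw [show n - (n - j - k) - j = k by omega]
  · obtain ⟨i, j⟩ := p
    dsimp only at hp
    rw [show n - j - (n - i - j) = i by omega]
  · exact h p.1 p.2 (by omega)

lemma KS_binomial {A : Type*} [CommRing A] [Algebra ℚ A] (a b : A) (x y : ℕ → A) (n : ℕ) :
    KS (fun k => a ^ k * x k + b ^ k * y k) n =
      ∑ k ∈ Finset.range (n + 1),
        a ^ k * b ^ (n - k) * KS x k * KS y (n - k) := by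
  induction n using Nat.strong_induction_on with
  | _ n IH =>
    match n with
    | 0 => simp [KS]
    | (n + 1) =>
      have hc : ((n : ℚ) + 1) ≠ 0 := by positivity
      set T : ℕ → A := fun k => a ^ k * b ^ (n + 1 - k) * KS x k * KS y (n + 1 - k) with hT
      have key : ((n : ℚ) + 1) • KS (fun k => a ^ k * x k + b ^ k * y k) (n + 1)
          = ((n : ℚ) + 1) • ∑ k ∈ Finset.range (n + 2), T k := by
        rw [KS_rec]
        have step1 : ∑ j ∈ Finset.range (n + 1),
            ((-1 : A) ^ j * KS (fun k => a ^ k * x k + b ^ k * y k) (n - j) *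
              ((fun k => a ^ k * x k + b ^ k * y k) (j + 1)))
          = (∑ j ∈ Finset.range (n + 1), ∑ k ∈ Finset.range (n + 1 - j),
              (-1 : A) ^ j * (a ^ k * b ^ (n - j - k) * KS x k * KS y (n - j - k)) *
                (a ^ (j + 1) * x (j + 1)))
            + ∑ j ∈ Finset.range (n + 1), ∑ k ∈ Finset.range (n + 1 - j),
              (-1 : A) ^ j * (a ^ k * b ^ (n - j - k) * KS x k * KS y (n - j - k)) *
                (b ^ (j + 1) * y (j + 1)) := by
          rw [← Finset.sum_add_distrib]
          refine Finset.sum_congr rfl fun j hj => ?_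
          simp only [Finset.mem_range] at hj
          rw [IH (n - j) (by omega)]
          have hr : n - j + 1 = n + 1 - j := by omega
          rw [hr, mul_add, Finset.mul_sum, Finset.sum_mul, Finset.sum_mul,
            ← Finset.sum_add_distrib]
        rw [step1]
        -- A part
        have hA : (∑ j ∈ Finset.range (n + 1), ∑ k ∈ Finset.range (n + 1 - j),
              (-1 : A) ^ j * (a ^ k * b ^ (n - j - k) * KS x k * KS y (n - j - k)) *
                (a ^ (j + 1) * x (j + 1)))
            = ∑ k ∈ Finset.range (n + 2), (k : ℚ) • T k := by
          rw [tri_rot n _ (fun i j => a ^ (n + 1 - i) * b ^ i * KS y i *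
              ((-1 : A) ^ j * KS x (n - i - j) * x (j + 1)))
            (by
              intro j k hjk
              have h1 : n - (n - j - k) - j = k := by omega
              have h2 : n + 1 - (n - j - k) = k + (j + 1) := by omega
              rw [h1, h2, pow_add]; ring)]
          have key2 : ∀ i ∈ Finset.range (n + 1),
              (∑ j ∈ Finset.range (n + 1 - i), a ^ (n + 1 - i) * b ^ i * KS y i *
                ((-1 : A) ^ j * KS x (n - i - j) * x (j + 1)))
              = ((n - i : ℕ) + 1 : ℚ) • (a ^ (n + 1 - i) * b ^ i * KS x (n - i + 1) * KS y i) := by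
            intro i hi
            simp only [Finset.mem_range] at hi
            rw [← Finset.mul_sum]
            have hr : n + 1 - i = (n - i) + 1 := by omega
            rw [hr, ← KS_rec x (n - i), mul_smul_comm]
            congr 1
            ring
          rw [Finset.sum_congr rfl key2]
          conv_lhs => rw [← Finset.sum_range_reflect]
          conv_rhs => rw [Finset.sum_range_succ']
          simp only [Nat.cast_zero, zero_smul, add_zero]
          refine Finset.sum_congr rfl fun i hi => ?_
          simp only [Finset.mem_range] at hi
          simp only [hT]
          simp only [show n + 1 - 1 - i = n - i by omega, show n - (n - i) = i by omega,
            show n + 1 - (n - i) = i + 1 by omega, show n - (n - i) + 1 = i + 1 by omega,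
            show n + 1 - (i + 1) = n - i by omega]
          push_cast
          ring_nf
        -- B part
        have hB : (∑ j ∈ Finset.range (n + 1), ∑ k ∈ Finset.range (n + 1 - j),
              (-1 : A) ^ j * (a ^ k * b ^ (n - j - k) * KS x k * KS y (n - j - k)) *
                (b ^ (j + 1) * y (j + 1)))
            = ∑ k ∈ Finset.range (n + 2), ((n + 1 - k : ℕ) : ℚ) • T k := by
          rw [tri_swap n _ (fun k j => a ^ k * b ^ (n + 1 - k) * KS x k *
              ((-1 : A) ^ j * KS y (n - k - j) * y (j + 1)))
            (by
              intro j k hjk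
              have h3 : n - j - k = n - k - j := by omega
              have h2 : n + 1 - k = (n - k - j) + (j + 1) := by omega
              rw [h3, h2, pow_add]; ring)]
          have key2 : ∀ k ∈ Finset.range (n + 1),
              (∑ j ∈ Finset.range (n + 1 - k), a ^ k * b ^ (n + 1 - k) * KS x k *
                ((-1 : A) ^ j * KS y (n - k - j) * y (j + 1)))
              = ((n + 1 - k : ℕ) : ℚ) • T k := by
            intro k hk
            simp only [Finset.mem_range] at hk
            rw [← Finset.mul_sum]
            simp only [hT]
            have hr : n + 1 - k = (n - k) + 1 := by omega
            rw [hr, ← KS_rec y (n - k),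
              show ((n - k + 1 : ℕ) : ℚ) = ((n - k : ℕ) : ℚ) + 1 by push_cast; ring,
              mul_smul_comm]
          rw [Finset.sum_congr rfl key2]
          conv_rhs => rw [Finset.sum_range_succ]
          simp
        rw [hA, hB, ← Finset.sum_add_distrib, Finset.smul_sum]
        refine Finset.sum_congr rfl fun k hk => ?_
        simp only [Finset.mem_range] at hk
        rw [← add_smul]
        congr 1
        rw [← Nat.cast_add, show k + (n + 1 - k) = n + 1 by omega]
        push_cast
        ring
      have h2 := congrArg (fun t => ((n : ℚ) + 1)⁻¹ • t) key
      simpa [inv_smul_smul₀ hc] using h2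

/-- In the polynomial ring with variables `a = X (inl 0)`, `b = X (inr 0)`,
`xₖ = X (inl k)`, `yₖ = X (inr k)` (`k ≥ 1`):
`Pₙ(a x₁ + b y₁, …, aⁿ xₙ + bⁿ yₙ)
  = Σ_{k=0}^n aᵏ bⁿ⁻ᵏ Pₖ(x₁,…,xₖ) Pₙ₋ₖ(y₁,…,yₙ₋ₖ)`. -/
theorem kailathSegall_binomial_scaled (n : ℕ) :
    KS (fun k =>
        (MvPolynomial.X (Sum.inl 0) : MvPolynomial (ℕ ⊕ ℕ) ℚ) ^ k *
            MvPolynomial.X (Sum.inl k) +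
          MvPolynomial.X (Sum.inr 0) ^ k * MvPolynomial.X (Sum.inr k)) n =
      ∑ k ∈ Finset.range (n + 1),
        MvPolynomial.X (Sum.inl 0) ^ k * MvPolynomial.X (Sum.inr 0) ^ (n - k) *
          KS (fun j => (MvPolynomial.X (Sum.inl j) : MvPolynomial (ℕ ⊕ ℕ) ℚ)) k *
          KS (fun j => (MvPolynomial.X (Sum.inr j) : MvPolynomial (ℕ ⊕ ℕ) ℚ)) (n - k) := by
  exact KS_binomial _ _ _ _ n
end

section
/- For every n ≥ 2, the identity P_n(x, t, 0, …, 0) = H_n(x, t) holds in ℚ[x, t], where H_n(x, t) are the generalized Hermite polynomials; equivalently, the n-th coefficient of the formal power series exp(u x − (1/2) u² t) in ℚ[x,t][[u]] equals P_n(x, t, 0, …, 0). -/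
noncomputable abbrev KSA := MvPolynomial (Fin 2) ℚ

noncomputable def fser : PowerSeries KSA :=
  PowerSeries.mk fun k => if k = 1 then MvPolynomial.X 0
    else if k = 2 then (-(1/2 : ℚ)) • MvPolynomial.X 1 else 0

noncomputable def xsf : ℕ → KSA := fun k =>
  if k = 1 then MvPolynomial.X 0 else if k = 2 then MvPolynomial.X 1 else 0

lemma fser_X_dvd : (PowerSeries.X : PowerSeries KSA) ∣ fser := by
  rw [PowerSeries.X_dvd_iff, ← PowerSeries.coeff_zero_eq_constantCoeff_apply]
  simp [fser]

lemma coeff_fser_pow_eq_zero {m k : ℕ} (h : m < k) :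
    PowerSeries.coeff m (fser ^ k) = 0 :=
  (PowerSeries.X_pow_dvd_iff.1 (pow_dvd_pow_of_dvd fser_X_dvd k)) m h

lemma deriv_fser :
    PowerSeries.derivativeFun fser =
      PowerSeries.C (MvPolynomial.X 0)
        + PowerSeries.C (-(MvPolynomial.X 1)) * PowerSeries.X := by
  apply PowerSeries.ext
  intro n
  rw [show PowerSeries.derivativeFun fser = PowerSeries.derivative KSA fser from rfl,
    PowerSeries.coeff_derivativeFun]
  match n with
  | 0 => simp [fser]
  | 1 =>
      simp only [fser, PowerSeries.coeff_mk, map_add, PowerSeries.coeff_C,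
        PowerSeries.coeff_C_mul, PowerSeries.coeff_X]
      norm_num
      rw [show ((2:KSA)) = MvPolynomial.C (2:ℚ) from (map_ofNat MvPolynomial.C 2).symm,
        MvPolynomial.smul_eq_C_mul,
        mul_comm (MvPolynomial.X 1), ← mul_assoc, ← map_mul]
      norm_num
  | (n+2) =>
      simp only [fser, PowerSeries.coeff_mk, map_add, PowerSeries.coeff_C,
        PowerSeries.coeff_C_mul, PowerSeries.coeff_X]
      norm_num [show n+2+1 ≠ 2 by omega, show n+2+1 ≠ 1 by omega, show n+2 ≠ 1 by omega]

lemma coeff_mul_deriv (g : PowerSeries KSA) (n : ℕ) :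
    PowerSeries.coeff (n+1) (g * PowerSeries.derivativeFun fser) =
      PowerSeries.coeff (n+1) g * MvPolynomial.X 0
        - PowerSeries.coeff n g * MvPolynomial.X 1 := by
  rw [deriv_fser, mul_add, map_add, PowerSeries.coeff_mul_C,
    show g * (PowerSeries.C (-(MvPolynomial.X 1)) * PowerSeries.X)
      = (g * PowerSeries.X) * PowerSeries.C (-(MvPolynomial.X 1)) from by ring,
    PowerSeries.coeff_mul_C, PowerSeries.coeff_succ_mul_X]
  ring

lemma derivApp (f : PowerSeries KSA) :
    PowerSeries.derivative KSA f = PowerSeries.derivativeFun f := rfl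

lemma key (m j : ℕ) :
    ((m:ℚ)+2) • PowerSeries.coeff (m+2) (fser^(j+1)) =
      ((j:ℚ)+1) • (PowerSeries.coeff (m+1) (fser^j) * MvPolynomial.X 0
        - PowerSeries.coeff m (fser^j) * MvPolynomial.X 1) := by
  have h2 : PowerSeries.derivativeFun (fser^(j+1)) =
      (j+1) • (fser^j * PowerSeries.derivativeFun fser) := by
    have h := Derivation.leibniz_pow (D := PowerSeries.derivative KSA) (a := fser) (j+1)
    rw [derivApp, derivApp] at h
    simpa [smul_eq_mul] using h
  have hd := PowerSeries.coeff_derivativeFun (fser^(j+1)) (m+1)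
  rw [derivApp, h2, map_nsmul, coeff_mul_deriv] at hd
  rw [show ((m:ℚ)+2) = ((m+2:ℕ):ℚ) by push_cast; ring, Nat.cast_smul_eq_nsmul,
    show ((j:ℚ)+1) = ((j+1:ℕ):ℚ) by push_cast; ring, Nat.cast_smul_eq_nsmul]
  simp only [nsmul_eq_mul] at hd ⊢
  rw [show m+1+1 = m+2 from rfl] at hd
  push_cast at hd ⊢
  linear_combination -hd

lemma Hrec (m : ℕ) :
    ((m:ℚ)+2) • PowerSeries.coeff (m+2) (psExp fser) =
      PowerSeries.coeff (m+1) (psExp fser) * MvPolynomial.X 0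
        - PowerSeries.coeff m (psExp fser) * MvPolynomial.X 1 := by
  simp only [psExp, PowerSeries.coeff_mk]
  rw [Finset.smul_sum, show m+2+1 = (m+2)+1 from rfl, Finset.sum_range_succ']
  have hterm : ∀ j ∈ Finset.range (m+2),
      ((m:ℚ)+2) • (((j+1).factorial:ℚ)⁻¹ • PowerSeries.coeff (m+2) (fser^(j+1)))
        = ((j.factorial:ℚ))⁻¹ • PowerSeries.coeff (m+1) (fser^j) * MvPolynomial.X 0
          - ((j.factorial:ℚ))⁻¹ • PowerSeries.coeff m (fser^j) * MvPolynomial.X 1 := by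
    intro j _
    rw [smul_comm, key m j, smul_smul]
    have hfac : (((j+1).factorial:ℚ))⁻¹ * ((j:ℚ)+1) = ((j.factorial:ℚ))⁻¹ := by
      rw [Nat.factorial_succ]
      push_cast
      have h1 : ((j:ℚ)+1) ≠ 0 := by positivity
      have h2 : ((j.factorial:ℚ)) ≠ 0 := by
        exact_mod_cast Nat.cast_ne_zero.2 (Nat.factorial_ne_zero j)
      field_simp
    rw [hfac, smul_sub, smul_mul_assoc, smul_mul_assoc]
  rw [Finset.sum_congr rfl hterm, Finset.sum_sub_distrib, ← Finset.sum_mul, ← Finset.sum_mul]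
  have h0 : ((m:ℚ)+2) • ((Nat.factorial 0:ℚ))⁻¹ • PowerSeries.coeff (m+2) (fser^0) = 0 := by
    simp
  rw [h0, add_zero]
  have hsec : ∑ j ∈ Finset.range (m+2), ((j.factorial:ℚ))⁻¹ • PowerSeries.coeff m (fser^j)
      = ∑ j ∈ Finset.range (m+1), ((j.factorial:ℚ))⁻¹ • PowerSeries.coeff m (fser^j) := by
    rw [Finset.sum_range_succ, coeff_fser_pow_eq_zero (by omega), smul_zero, add_zero]
  rw [hsec]

lemma KS0 : KS xsf 0 = 1 := by rw [KS]

lemma KS1 : KS xsf 1 = MvPolynomial.X 0 := by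
  rw [KS]
  simp [xsf, KS0]

lemma KSrec (m : ℕ) :
    KS xsf (m+2) = (((m:ℚ)+2)⁻¹) •
      (KS xsf (m+1) * MvPolynomial.X 0 - KS xsf m * MvPolynomial.X 1) := by
  rw [show m+2 = (m+1)+1 from rfl, KS]
  rw [Finset.sum_range_succ', Finset.sum_range_succ']
  have hz : ∀ j ∈ Finset.range m,
      ((-1 : KSA)^(j+1+1) * KS xsf (m+1-(j+1+1)) * xsf (j+1+1+1)) = 0 := by
    intro j _
    have : xsf (j+1+1+1) = 0 := by simp [xsf]
    rw [this, mul_zero]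
  rw [Finset.sum_eq_zero hz, zero_add]
  have h1 : xsf (0+1+1) = MvPolynomial.X 1 := by simp [xsf]
  have h0 : xsf (0+1) = MvPolynomial.X 0 := by simp [xsf]
  rw [h1, h0]
  norm_num
  rw [show ((m:ℚ)+1+1) = ((m:ℚ)+2) by ring, smul_sub]
  ring

lemma H0 : PowerSeries.coeff 0 (psExp fser) = 1 := by
  simp [psExp]

lemma H1 : PowerSeries.coeff 1 (psExp fser) = MvPolynomial.X 0 := by
  simp [psExp, Finset.sum_range_succ, fser, PowerSeries.coeff_one]

lemma mainKS : ∀ n : ℕ, KS xsf n = PowerSeries.coeff n (psExp fser) := by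
  have H : ∀ n : ℕ, KS xsf n = PowerSeries.coeff n (psExp fser) ∧
      KS xsf (n+1) = PowerSeries.coeff (n+1) (psExp fser) := by
    intro n
    induction n with
    | zero => exact ⟨by rw [KS0, H0], by rw [KS1, H1]⟩
    | succ m ih =>
      refine ⟨ih.2, ?_⟩
      rw [show m+1+1 = m+2 from rfl, KSrec m, ih.1, ih.2, ← Hrec m, smul_smul,
        inv_mul_cancel₀ (by positivity), one_smul]
  exact fun n => (H n).1

/-- With `x = X 0`, `t = X 1` in `ℚ[x,t]`, for every `n ≥ 2`:
`Pₙ(x, t, 0, …, 0) = Hₙ(x,t)`, where `Hₙ(x,t)` is the `n`-th coefficient of the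
generating series `exp(u x − (1/2) u² t)` in `ℚ[x,t][[u]]`. -/
theorem kailathSegall_hermite (n : ℕ) (hn : 2 ≤ n) :
    KS (fun k => if k = 1 then (MvPolynomial.X 0 : MvPolynomial (Fin 2) ℚ)
        else if k = 2 then MvPolynomial.X 1 else 0) n =
      PowerSeries.coeff n (psExp (PowerSeries.mk fun k =>
        if k = 1 then (MvPolynomial.X 0 : MvPolynomial (Fin 2) ℚ)
        else if k = 2 then (-(1 / 2 : ℚ)) • MvPolynomial.X 1 else 0)) := by
  exact mainKS n
end

section
/- For every n ≥ 1, the identity P_n(a(y − b t), a² y, a³ y, …, a^n y) = a^n C_n(y, b t) holds in the polynomial ring ℚ[a, b, y, t], where C_n are the generalized Charlier polynomials. -/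
open PowerSeries Finset

lemma coeff_pow_zero {A : Type*} [CommRing A] (f : PowerSeries A)
    (hf : PowerSeries.constantCoeff f = 0) {m k : ℕ} (h : m < k) :
    PowerSeries.coeff m (f ^ k) = 0 := by
  have hd : (X : PowerSeries A) ^ k ∣ f ^ k :=
    pow_dvd_pow_of_dvd (PowerSeries.X_dvd_iff.mpr hf) k
  exact PowerSeries.X_pow_dvd_iff.mp hd m h

lemma exp_rec {A : Type*} [CommRing A] [Algebra ℚ A] (f : PowerSeries A)
    (hf : PowerSeries.constantCoeff f = 0) (n : ℕ) :
    (n + 1) • PowerSeries.coeff (n + 1) (psExp f) =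
      ∑ j ∈ Finset.range (n + 1),
        PowerSeries.coeff (n - j) (psExp f) * ((j + 1) • PowerSeries.coeff (j + 1) f) := by
  have step1 : (n + 1) • PowerSeries.coeff (n + 1) (psExp f) =
      ∑ k ∈ Finset.range (n + 1),
        ((k.factorial : ℚ))⁻¹ • PowerSeries.coeff n (f ^ k * d⁄dX A f) := by
    rw [psExp, PowerSeries.coeff_mk, smul_sum]
    rw [Finset.sum_range_succ' (fun k => (n+1) • (((k.factorial : ℚ))⁻¹ • PowerSeries.coeff (n+1) (f ^ k)))]
    have h0 : (n+1) • ((((0:ℕ).factorial : ℚ))⁻¹ • PowerSeries.coeff (n+1) (f ^ 0)) = 0 := by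
      simp
    rw [h0, add_zero]
    refine Finset.sum_congr rfl fun k _ => ?_
    have hD : (n + 1) • PowerSeries.coeff (n + 1) (f ^ (k+1)) =
        (k + 1) • PowerSeries.coeff n (f ^ k * d⁄dX A f) := by
      have h1 := PowerSeries.coeff_derivative (f ^ (k+1)) n
      have h2 : d⁄dX A (f ^ (k+1)) = (k+1) • (f ^ k) • (d⁄dX A f) :=
        Derivation.leibniz_pow (D := d⁄dX A) (a := f) (k+1)
      rw [h2] at h1
      simp only [smul_eq_mul, map_nsmul] at h1
      rw [nsmul_eq_mul] at h1
      rw [nsmul_eq_mul, nsmul_eq_mul]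
      push_cast at h1 ⊢
      linear_combination -h1
    rw [smul_comm, hD, smul_comm ((((k+1).factorial : ℚ))⁻¹) , ← Nat.cast_smul_eq_nsmul ℚ (k+1),
      smul_smul]
    congr 1
    rw [Nat.factorial_succ]
    push_cast
    field_simp
  rw [step1]
  have step2 : ∀ k ∈ Finset.range (n+1),
      ((k.factorial : ℚ))⁻¹ • PowerSeries.coeff n (f ^ k * d⁄dX A f) =
        ∑ j ∈ Finset.range (n + 1),
          (((k.factorial : ℚ))⁻¹ • PowerSeries.coeff j (f ^ k)) * PowerSeries.coeff (n - j) (d⁄dX A f) := by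
    intro k _
    rw [PowerSeries.coeff_mul, Finset.Nat.sum_antidiagonal_eq_sum_range_succ_mk, smul_sum]
    exact Finset.sum_congr rfl fun j _ => (smul_mul_assoc _ _ _).symm
  rw [Finset.sum_congr rfl step2, Finset.sum_comm]
  have step3 : ∀ j ∈ Finset.range (n+1),
      ∑ k ∈ Finset.range (n + 1),
        (((k.factorial : ℚ))⁻¹ • PowerSeries.coeff j (f ^ k)) * PowerSeries.coeff (n - j) (d⁄dX A f)
      = PowerSeries.coeff j (psExp f) * ((n - j + 1) • PowerSeries.coeff (n - j + 1) f) := by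
    intro j hj
    simp only [Finset.mem_range] at hj
    rw [← Finset.sum_mul]
    have hsub : ∑ k ∈ Finset.range (n + 1), ((k.factorial : ℚ))⁻¹ • PowerSeries.coeff j (f ^ k)
        = PowerSeries.coeff j (psExp f) := by
      rw [psExp, PowerSeries.coeff_mk]
      refine (Finset.sum_subset ?_ ?_).symm
      · exact Finset.range_subset_range.mpr (by omega)
      · intro k _ hk
        simp only [Finset.mem_range, not_lt] at hk
        rw [coeff_pow_zero f hf (by omega), smul_zero]
    rw [hsub, PowerSeries.coeff_derivative, nsmul_eq_mul]
    push_cast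
    ring
  rw [Finset.sum_congr rfl step3, ← Finset.sum_range_reflect]
  refine Finset.sum_congr rfl fun j hj => ?_
  simp only [Finset.mem_range] at hj
  have hj' : j ≤ n := by omega
  simp only [Nat.add_sub_cancel]
  rw [Nat.sub_sub_self hj']

abbrev Amv := MvPolynomial (Fin 4) ℚ

noncomputable def gser : PowerSeries Amv :=
  PowerSeries.mk fun k =>
    if k = 0 then 0
    else ((-1 : ℚ) ^ (k + 1) / k) • (MvPolynomial.X 2 : MvPolynomial (Fin 4) ℚ) -
      (if k = 1 then MvPolynomial.X 1 * MvPolynomial.X 3 else 0)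

lemma gser_const : PowerSeries.constantCoeff gser = 0 := by
  rw [← PowerSeries.coeff_zero_eq_constantCoeff_apply, gser, PowerSeries.coeff_mk, if_pos rfl]

lemma gser_coeff (j : ℕ) :
    (j + 1) • PowerSeries.coeff (j + 1) gser =
      (-1 : Amv) ^ j * MvPolynomial.X 2 -
        (if j = 0 then MvPolynomial.X 1 * MvPolynomial.X 3 else 0) := by
  rw [gser, PowerSeries.coeff_mk, if_neg (Nat.succ_ne_zero j)]
  rw [← Nat.cast_smul_eq_nsmul ℚ, smul_sub, smul_smul]
  push_cast
  rw [mul_div_cancel₀ _ (by positivity : ((j : ℚ) + 1) ≠ 0)]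
  congr 1
  · rw [show j + 1 + 1 = j + 2 from rfl, pow_add, neg_one_sq, mul_one, Algebra.smul_def,
      map_pow, map_neg, map_one]
  · rcases eq_or_ne j 0 with h | h
    · simp [h]
    · simp [h, if_neg (by omega : j + 1 ≠ 1)]

lemma ks_main (n : ℕ) :
    KS (fun k => if k = 1 then
          (MvPolynomial.X 0 : MvPolynomial (Fin 4) ℚ) *
            (MvPolynomial.X 2 - MvPolynomial.X 1 * MvPolynomial.X 3)
        else MvPolynomial.X 0 ^ k * MvPolynomial.X 2) n =
      (MvPolynomial.X 0 : MvPolynomial (Fin 4) ℚ) ^ n *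
        PowerSeries.coeff n (psExp gser) := by
  induction n using Nat.strong_induction_on with
  | _ n ih =>
    match n with
    | 0 =>
      rw [KS]
      simp [psExp]
    | Nat.succ n =>
      rw [KS]
      have key : ∑ j ∈ Finset.range (n + 1),
          ((-1 : Amv) ^ j * KS (fun k => if k = 1 then
              (MvPolynomial.X 0 : MvPolynomial (Fin 4) ℚ) *
                (MvPolynomial.X 2 - MvPolynomial.X 1 * MvPolynomial.X 3)
            else MvPolynomial.X 0 ^ k * MvPolynomial.X 2) (n - j) *
            (if j + 1 = 1 then
              (MvPolynomial.X 0 : MvPolynomial (Fin 4) ℚ) *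
                (MvPolynomial.X 2 - MvPolynomial.X 1 * MvPolynomial.X 3)
            else MvPolynomial.X 0 ^ (j+1) * MvPolynomial.X 2)) =
          ((n : ℚ) + 1) • ((MvPolynomial.X 0 : Amv) ^ (n+1) *
            PowerSeries.coeff (n+1) (psExp gser)) := by
        rw [show ((n : ℚ) + 1) = ((n + 1 : ℕ) : ℚ) by push_cast; ring,
          Nat.cast_smul_eq_nsmul, ← mul_smul_comm, exp_rec gser gser_const n, Finset.mul_sum]
        refine Finset.sum_congr rfl fun j hj => ?_
        simp only [Finset.mem_range] at hj
        rw [ih (n - j) (by omega), gser_coeff j]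
        rcases eq_or_ne j 0 with h | h
        · subst h; norm_num; ring
        · rw [if_neg (by omega : j + 1 ≠ 1), if_neg h, sub_zero,
            show n + 1 = (n - j) + (j + 1) by omega, pow_add]
          ring
      rw [key, smul_smul, inv_mul_cancel₀ (by positivity : ((n:ℚ)+1) ≠ 0), one_smul]

/-- With `a = X 0`, `b = X 1`, `y = X 2`, `t = X 3` in `ℚ[a,b,y,t]`, for every `n ≥ 1`:
`Pₙ(a(y − bt), a² y, a³ y, …, aⁿ y) = aⁿ Cₙ(y, bt)`, where `Cₙ(x,s)` is the `n`-th
coefficient of the Charlier generating series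
`e^{−su}(1+u)^x = exp(Σ_{k≥1} (((−1)^{k+1}/k) x − [k=1] s) uᵏ)`. -/
theorem kailathSegall_charlier (n : ℕ) (hn : 1 ≤ n) :
    KS (fun k => if k = 1 then
          (MvPolynomial.X 0 : MvPolynomial (Fin 4) ℚ) *
            (MvPolynomial.X 2 - MvPolynomial.X 1 * MvPolynomial.X 3)
        else MvPolynomial.X 0 ^ k * MvPolynomial.X 2) n =
      (MvPolynomial.X 0 : MvPolynomial (Fin 4) ℚ) ^ n *
        PowerSeries.coeff n (psExp (PowerSeries.mk fun k =>
          if k = 0 then 0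
          else ((-1 : ℚ) ^ (k + 1) / k) • (MvPolynomial.X 2 : MvPolynomial (Fin 4) ℚ) -
            (if k = 1 then MvPolynomial.X 1 * MvPolynomial.X 3 else 0))) :=
  ks_main n
end

section
/- For every n ≥ 0, the identity P_n(x, x, …, x) = x(x−1)(x−2)⋯(x−n+1)/n! holds in ℚ[x], i.e., the Kailath–Segall polynomial evaluated with all variables equal to x is the n-th falling factorial divided by n!. -/
open Polynomial Finset in
lemma KS_aux (n : ℕ) :
    ∑ j ∈ Finset.range (n+1),
      ((-1 : Polynomial ℚ)^j * Polynomial.C ((((n-j).factorial : ℚ))⁻¹) *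
        ∏ i ∈ Finset.range (n-j), (Polynomial.X - (i : Polynomial ℚ))) =
    Polynomial.C (((n.factorial : ℚ))⁻¹) *
      ∏ j ∈ Finset.range n, (Polynomial.X - ((j : Polynomial ℚ) + 1)) := by
  induction n with
  | zero => simp
  | succ n ih =>
    rw [Finset.sum_range_succ']
    simp only [Nat.succ_sub_succ]
    have h1 : ∑ i ∈ Finset.range (n+1),
        ((-1 : Polynomial ℚ)^(i+1) * Polynomial.C ((((n-i).factorial : ℚ))⁻¹) *
          ∏ k ∈ Finset.range (n-i), (Polynomial.X - (k : Polynomial ℚ)))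
        = - (Polynomial.C (((n.factorial : ℚ))⁻¹) *
      ∏ j ∈ Finset.range n, (Polynomial.X - ((j : Polynomial ℚ) + 1))) := by
      rw [← ih, ← Finset.sum_neg_distrib]
      apply Finset.sum_congr rfl
      intro i _
      ring
    rw [h1]
    simp only [Nat.sub_zero, pow_zero, one_mul]
    rw [Finset.prod_range_succ' (fun i => (Polynomial.X - (i : Polynomial ℚ))) n,
        Finset.prod_range_succ (fun j => (Polynomial.X - ((j : Polynomial ℚ) + 1))) n]
    push_cast
    have hb : ((n.factorial : ℚ))⁻¹ = ((n:ℚ)+1) * (((n+1).factorial : ℚ))⁻¹ := by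
      rw [Nat.factorial_succ]
      field_simp
      push_cast
      ring
    rw [hb, map_mul]
    have : (Polynomial.C ((n:ℚ)+1)) = ((n : Polynomial ℚ) + 1) := by
      simp [map_add, map_one, map_natCast]
    rw [this]
    ring

/-- `Pₙ(x, x, …, x) = x(x−1)⋯(x−n+1)/n!` in `ℚ[x]`. -/
theorem kailathSegall_diagonal (n : ℕ) :
    KS (fun _ => (Polynomial.X : Polynomial ℚ)) n =
      ((n.factorial : ℚ))⁻¹ •
        ∏ j ∈ Finset.range n, ((Polynomial.X : Polynomial ℚ) - (j : Polynomial ℚ)) := by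
  induction n using Nat.strong_induction_on with
  | _ n ih =>
    match n with
    | 0 => simp [KS]
    | Nat.succ n =>
      rw [KS]
      have hsum : ∑ j ∈ Finset.range (n + 1),
          ((-1 : Polynomial ℚ) ^ j * KS (fun _ => (Polynomial.X : Polynomial ℚ)) (n - j) *
            (fun _ => (Polynomial.X : Polynomial ℚ)) (j + 1))
          = (∑ j ∈ Finset.range (n+1),
              ((-1 : Polynomial ℚ)^j * Polynomial.C ((((n-j).factorial : ℚ))⁻¹) *
                ∏ i ∈ Finset.range (n-j), (Polynomial.X - (i : Polynomial ℚ)))) * Polynomial.X := by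
        rw [Finset.sum_mul]
        apply Finset.sum_congr rfl
        intro j hj
        rw [ih (n - j) (by omega), Polynomial.smul_eq_C_mul]
        ring
      rw [hsum, KS_aux, Polynomial.smul_eq_C_mul, Polynomial.smul_eq_C_mul,
        Finset.prod_range_succ' (fun i => (Polynomial.X - (i : Polynomial ℚ))) n]
      push_cast
      have hb : (((n+1).factorial : ℚ))⁻¹ = ((n:ℚ)+1)⁻¹ * ((n.factorial : ℚ))⁻¹ := by
        rw [Nat.factorial_succ]
        push_cast
        rw [mul_inv]
      rw [hb, map_mul]
      ring
end

section
/- Let ν be a Lévy measure on ℝ and let f : ℝ → ℝ be a continuous function with f(0) = 0 and ∫_ℝ f(x)² ν(dx) < ∞. If ∫_ℝ (e^{i z f(x)} − 1 − i z f(x)) ν(dx) = 0 for every z ∈ ℝ, then f(x) = 0 for ν-almost every x. -/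
open MeasureTheory

lemma norm_exp_I_mul_bound (y : ℝ) :
    ‖Complex.exp (Complex.I * (y : ℂ)) - 1 - Complex.I * (y : ℂ)‖ ≤ 3 * y ^ 2 := by
  rcases le_or_gt (|y|) 1 with h | h
  · have habs : ‖Complex.I * (y : ℂ)‖ ≤ 1 := by
      simpa [Complex.norm_real] using h
    have := Complex.norm_exp_sub_one_sub_id_le habs
    have h2 : ‖Complex.I * (y : ℂ)‖ ^ 2 = y ^ 2 := by
      simp [Complex.norm_real, sq_abs]
    rw [h2] at this
    calc ‖Complex.exp (Complex.I * (y : ℂ)) - 1 - Complex.I * (y : ℂ)‖ ≤ y ^ 2 := this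
      _ ≤ 3 * y ^ 2 := by nlinarith [sq_nonneg y]
  · have h1 : 1 ≤ y ^ 2 := by nlinarith [sq_abs y]
    have hy : |y| ≤ y ^ 2 := by nlinarith [sq_abs y, abs_nonneg y]
    have hnorm : ‖Complex.exp (Complex.I * (y : ℂ))‖ = 1 := by
      rw [mul_comm]
      exact Complex.norm_exp_ofReal_mul_I y
    calc ‖Complex.exp (Complex.I * (y : ℂ)) - 1 - Complex.I * (y : ℂ)‖
        ≤ ‖Complex.exp (Complex.I * (y : ℂ)) - 1‖ + ‖Complex.I * (y : ℂ)‖ := norm_sub_le _ _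
      _ ≤ (‖Complex.exp (Complex.I * (y : ℂ))‖ + ‖(1 : ℂ)‖) + ‖Complex.I * (y : ℂ)‖ := by
          gcongr; exact norm_sub_le _ _
      _ = 1 + 1 + |y| := by simp [hnorm, Complex.norm_real]
      _ ≤ 3 * y ^ 2 := by nlinarith

/-- Let `ν` be a Lévy measure on `ℝ` (i.e. `ν({0}) = 0` and `∫ min(x²,1) ν(dx) < ∞`)
and `f : ℝ → ℝ` continuous with `f(0) = 0` and `∫ f² dν < ∞`.
If `∫ (e^{izf(x)} − 1 − izf(x)) ν(dx) = 0` for every `z ∈ ℝ`, then `f = 0` ν-a.e. -/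
theorem levy_exp_integral_zero (ν : Measure ℝ) (hν0 : ν {0} = 0)
    (hν : ∫⁻ x, ENNReal.ofReal (min (x ^ 2) 1) ∂ν < ⊤)
    (f : ℝ → ℝ) (hf : Continuous f) (hf0 : f 0 = 0)
    (hf2 : Integrable (fun x => f x ^ 2) ν)
    (hz : ∀ z : ℝ,
      ∫ x, (Complex.exp (Complex.I * ((z * f x : ℝ) : ℂ)) - 1 -
        Complex.I * ((z * f x : ℝ) : ℂ)) ∂ν = 0) :
    ∀ᵐ x ∂ν, f x = 0 := by
  -- for each z, 1 - cos(z f x) = 0 a.e.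
  have key : ∀ z : ℝ, ∀ᵐ x ∂ν, Real.cos (z * f x) = 1 := by
    intro z
    have hint : Integrable (fun x => Complex.exp (Complex.I * ((z * f x : ℝ) : ℂ)) - 1 -
        Complex.I * ((z * f x : ℝ) : ℂ)) ν := by
      refine Integrable.mono' (hf2.const_mul (3 * z ^ 2)) ?_ ?_
      · apply Continuous.aestronglyMeasurable
        continuity
      · refine Filter.Eventually.of_forall fun x => ?_
        calc ‖Complex.exp (Complex.I * ((z * f x : ℝ) : ℂ)) - 1 -
              Complex.I * ((z * f x : ℝ) : ℂ)‖ ≤ 3 * (z * f x) ^ 2 := norm_exp_I_mul_bound _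
          _ = 3 * z ^ 2 * f x ^ 2 := by ring
    have hre : ∫ x, (Complex.exp (Complex.I * ((z * f x : ℝ) : ℂ)) - 1 -
        Complex.I * ((z * f x : ℝ) : ℂ)).re ∂ν = 0 := by
      have h := integral_re (𝕜 := ℂ) hint
      rw [hz z] at h
      simpa using h
    have hre' : ∀ x : ℝ, (Complex.exp (Complex.I * ((z * f x : ℝ) : ℂ)) - 1 -
        Complex.I * ((z * f x : ℝ) : ℂ)).re = -(1 - Real.cos (z * f x)) := by
      intro x
      simp [Complex.exp_re]
    have hint2 : Integrable (fun x => 1 - Real.cos (z * f x)) ν := by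
      have : Integrable (fun x => -(Complex.exp (Complex.I * ((z * f x : ℝ) : ℂ)) - 1 -
          Complex.I * ((z * f x : ℝ) : ℂ)).re) ν := (hint.re).neg
      refine this.congr (Filter.Eventually.of_forall fun x => ?_)
      simp only [hre']; ring
    have hzero : ∫ x, (1 - Real.cos (z * f x)) ∂ν = 0 := by
      have : ∫ x, (1 - Real.cos (z * f x)) ∂ν
          = -∫ x, (Complex.exp (Complex.I * ((z * f x : ℝ) : ℂ)) - 1 -
            Complex.I * ((z * f x : ℝ) : ℂ)).re ∂ν := by
        rw [← integral_neg]
        exact integral_congr_ae (Filter.Eventually.of_forall fun x => by simp only [hre']; ring)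
      rw [this, hre, neg_zero]
    have hae : ∀ᵐ x ∂ν, 1 - Real.cos (z * f x) = 0 := by
      have := (integral_eq_zero_iff_of_nonneg
        (fun x => by simpa using Real.cos_le_one (z * f x)) hint2).mp hzero
      filter_upwards [this] with x hx
      simpa using hx
    filter_upwards [hae] with x hx
    linarith
  have keyQ : ∀ᵐ x ∂ν, ∀ q : ℚ, Real.cos ((q : ℝ) * f x) = 1 := by
    rw [ae_all_iff]
    exact fun q => key q
  filter_upwards [keyQ] with x hx
  by_contra hfx
  have hfx' : 0 < |f x| := abs_pos.mpr hfx
  have h2pi : (0 : ℝ) < 2 * Real.pi / |f x| := by positivity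
  obtain ⟨q, hq0, hq⟩ := exists_rat_btwn h2pi
  have hcos := hx q
  have habs : |(q : ℝ) * f x| < 2 * Real.pi := by
    rw [abs_mul]
    have hq0' : (0:ℝ) < q := by exact_mod_cast hq0
    calc |(q:ℝ)| * |f x| = (q:ℝ) * |f x| := by rw [abs_of_pos hq0']
      _ < (2 * Real.pi / |f x|) * |f x| := by gcongr
      _ = 2 * Real.pi := by field_simp
  obtain ⟨h1, h2⟩ := abs_lt.mp habs
  have := (Real.cos_eq_one_iff_of_lt_of_lt h1 h2).mp hcos
  have hq0' : (0:ℝ) < q := by exact_mod_cast hq0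
  have : f x = 0 := by
    have := mul_eq_zero.mp this
    rcases this with h | h
    · exact absurd h (ne_of_gt hq0')
    · exact h
  exact hfx this
end

section
/- Let ν be a Lévy measure on ℝ with infinite support such that ∫_ℝ |x|^k ν(dx) < ∞ for every k ≥ 2, let γ(dx) = x² ν(dx), and let p_n be a monic polynomial of degree n ≥ 1 with ∫_ℝ p_n(x) x^k γ(dx) = 0 for k = 0,…,n−1 and p_n(0) ≠ 0. Then p_n has n distinct nonzero real roots a_1,…,a_n, and there exist strictly positive real numbers b_1,…,b_n such that ∫_ℝ x^k ν(dx) = Σ_{j=1}^n b_j a_j^k for every k = 2,…,2n+1. -/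
open MeasureTheory Polynomial
open scoped ENNReal NNReal

/-- A monic real polynomial with no real roots is everywhere positive. -/
lemma aux_pos_of_no_roots (r : ℝ[X]) (hm : r.Monic) (hr : ∀ x : ℝ, r.eval x ≠ 0) :
    ∀ x : ℝ, 0 < r.eval x := by
  intro x
  by_contra hx
  push_neg at hx
  have hx' : r.eval x < 0 := lt_of_le_of_ne hx (hr x)
  rcases eq_or_lt_of_le (Nat.zero_le r.natDegree) with hd | hd
  · have h1 : r = 1 := hm.natDegree_eq_zero.mp hd.symm
    rw [h1] at hx'; simp at hx'; linarith
  · have hdeg : 0 < r.degree := by rwa [← natDegree_pos_iff_degree_pos]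
    have htend : Filter.Tendsto (fun y => r.eval y) Filter.atTop Filter.atTop :=
      r.tendsto_atTop_of_leadingCoeff_nonneg hdeg (by simp [hm.leadingCoeff])
    obtain ⟨y, hy1, hyx⟩ :=
      ((htend.eventually_ge_atTop 1).and (Filter.eventually_ge_atTop x)).exists
    have hcont : ContinuousOn (fun t => r.eval t) (Set.Icc x y) :=
      (r.continuous_aeval).continuousOn
    have h0mem : (0 : ℝ) ∈ Set.Icc (r.eval x) (r.eval y) := ⟨le_of_lt hx', by linarith⟩
    obtain ⟨c, _, hc⟩ := intermediate_value_Icc hyx hcont h0mem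
    exact hr c hc

lemma aux_pq_nonneg (p : ℝ[X]) (hp : p.Monic) (x : ℝ) :
    0 ≤ p.eval x *
      (∏ a ∈ p.roots.toFinset.filter (fun a => Odd (p.roots.count a)), (X - C a)).eval x := by
  classical
  obtain ⟨r, hr⟩ := p.prod_multiset_X_sub_C_dvd
  have hprodm : ((p.roots.map fun a => X - C a).prod).Monic :=
    monic_multiset_prod_of_monic _ _ (fun a _ => monic_X_sub_C a)
  have hrm : r.Monic := hprodm.of_mul_monic_left (hr ▸ hp)
  have hp0 : p ≠ 0 := hp.ne_zero
  have hroots_r : r.roots = 0 := by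
    have h1 : ((p.roots.map fun a => X - C a).prod).roots = p.roots :=
      roots_multiset_prod_X_sub_C _
    have hne : (p.roots.map fun a => X - C a).prod * r ≠ 0 := by rw [← hr]; exact hp0
    have h2 := roots_mul hne
    rw [h1, ← hr] at h2
    exact (left_eq_add.mp h2)
  have hrne : ∀ y : ℝ, r.eval y ≠ 0 := by
    intro y hy
    have : y ∈ r.roots := (mem_roots hrm.ne_zero).mpr hy
    simp [hroots_r] at this
  have hrpos := aux_pos_of_no_roots r hrm hrne
  -- rewrite eval p
  have hevalp : p.eval x = (∏ a ∈ p.roots.toFinset, (x - a) ^ p.roots.count a) * r.eval x := by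
    conv_lhs => rw [hr]
    rw [eval_mul, eval_multiset_prod, Multiset.map_map]
    congr 1
    have hc : (eval x ∘ fun a : ℝ => X - C a) = fun a => x - a := by
      funext a; simp
    rw [hc]
    exact Finset.prod_multiset_map_count _ _
  have hevalq :
      (∏ a ∈ p.roots.toFinset.filter (fun a => Odd (p.roots.count a)), (X - C a)).eval x
      = ∏ a ∈ p.roots.toFinset, if Odd (p.roots.count a) then (x - a) else 1 := by
    rw [eval_prod, Finset.prod_filter]
    simp
  rw [hevalp, hevalq]
  have key : 0 ≤ (∏ a ∈ p.roots.toFinset, (x - a) ^ p.roots.count a) *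
      ∏ a ∈ p.roots.toFinset, (if Odd (p.roots.count a) then (x - a) else 1) := by
    rw [← Finset.prod_mul_distrib]
    apply Finset.prod_nonneg
    intro a _
    by_cases hodd : Odd (p.roots.count a)
    · rw [if_pos hodd, ← pow_succ]
      exact (hodd.add_one).pow_nonneg _
    · rw [if_neg hodd, mul_one]
      exact (Nat.not_odd_iff_even.mp hodd).pow_nonneg _
  calc (0:ℝ) ≤ _ := mul_nonneg key (le_of_lt (hrpos x))
  _ = _ := by ring

lemma aux_integrable_pow (ν : Measure ℝ)
    (hmom : ∀ k : ℕ, 2 ≤ k → ∫⁻ x, ENNReal.ofReal (|x| ^ k) ∂ν < ⊤) (k : ℕ) :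
    Integrable (fun x : ℝ => x ^ k) (ν.withDensity fun x => ENNReal.ofReal (x ^ 2)) := by
  constructor
  · exact (measurable_id.pow_const k).aestronglyMeasurable
  · rw [HasFiniteIntegral]
    have hmeas : Measurable fun x : ℝ => (‖x ^ k‖₊ : ℝ≥0∞) :=
      (measurable_id.pow_const k).nnnorm.coe_nnreal_ennreal
    simp only [enorm_eq_nnnorm]
    rw [lintegral_withDensity_eq_lintegral_mul _ (by fun_prop) hmeas]
    have heq : ((fun x : ℝ => ENNReal.ofReal (x ^ 2)) * fun x : ℝ => (‖x ^ k‖₊ : ℝ≥0∞))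
        = fun x => ENNReal.ofReal (|x| ^ (k + 2)) := by
      funext x
      rw [Pi.mul_apply, ← enorm_eq_nnnorm, ← ofReal_norm, ← ENNReal.ofReal_mul (sq_nonneg x)]
      congr 1
      rw [Real.norm_eq_abs, abs_pow, ← sq_abs, pow_add]
      ring
    rw [heq]
    exact hmom (k + 2) (by omega)

lemma aux_integrable_poly (ν : Measure ℝ)
    (hmom : ∀ k : ℕ, 2 ≤ k → ∫⁻ x, ENNReal.ofReal (|x| ^ k) ∂ν < ⊤) (f : ℝ[X]) :
    Integrable (fun x : ℝ => f.eval x) (ν.withDensity fun x => ENNReal.ofReal (x ^ 2)) := by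
  induction f using Polynomial.induction_on' with
  | add p q hp hq => simp only [eval_add]; exact hp.add hq
  | monomial k c =>
      simpa [Polynomial.eval_monomial, mul_comm] using (aux_integrable_pow ν hmom k).const_mul c

lemma aux_integral_gamma (ν : Measure ℝ) (g : ℝ → ℝ) :
    ∫ x, g x ∂(ν.withDensity fun x => ENNReal.ofReal (x ^ 2)) = ∫ x, x ^ 2 * g x ∂ν := by
  have hd : (fun x : ℝ => ENNReal.ofReal (x ^ 2))
      = fun x => ((Real.toNNReal (x ^ 2) : ℝ≥0) : ℝ≥0∞) := rfl
  rw [hd, integral_withDensity_eq_integral_smul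
    (by fun_prop : Measurable fun x : ℝ => Real.toNNReal (x ^ 2))]
  congr 1
  funext x
  rw [NNReal.smul_def, smul_eq_mul, Real.coe_toNNReal _ (sq_nonneg x)]

lemma aux_gamma_supp (ν : Measure ℝ)
    (hsupp : {x : ℝ | ∀ U ∈ nhds x, ν U ≠ 0}.Infinite) :
    {x : ℝ | ∀ U ∈ nhds x,
      (ν.withDensity fun x => ENNReal.ofReal (x ^ 2)) U ≠ 0}.Infinite := by
  apply Set.Infinite.mono (s := {x : ℝ | ∀ U ∈ nhds x, ν U ≠ 0} \ {0})
  · intro x hx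
    obtain ⟨hxs, hx0⟩ := hx
    have hx0 : x ≠ 0 := by simpa using hx0
    have habs : 0 < |x| := abs_pos.mpr hx0
    intro U hU
    obtain ⟨V, hVU, hVopen, hxV⟩ := mem_nhds_iff.mp hU
    set W : Set ℝ := V ∩ {y : ℝ | |x| / 2 < |y|} with hW
    have hWopen : IsOpen W := hVopen.inter (isOpen_lt continuous_const (continuous_abs))
    have hxW : x ∈ W := ⟨hxV, by simp only [Set.mem_setOf_eq]; linarith⟩
    have hWnhds : W ∈ nhds x := hWopen.mem_nhds hxW
    have hνW : ν W ≠ 0 := hxs W hWnhds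
    have hle : ENNReal.ofReal ((|x| / 2) ^ 2) * ν W
        ≤ (ν.withDensity fun y => ENNReal.ofReal (y ^ 2)) U := by
      calc ENNReal.ofReal ((|x| / 2) ^ 2) * ν W
          = ∫⁻ _ in W, ENNReal.ofReal ((|x| / 2) ^ 2) ∂ν := (setLIntegral_const _ _).symm
        _ ≤ ∫⁻ y in W, ENNReal.ofReal (y ^ 2) ∂ν := by
            apply setLIntegral_mono (by fun_prop)
            intro y hy
            apply ENNReal.ofReal_le_ofReal
            have h1 : |x| / 2 ≤ |y| := le_of_lt hy.2
            calc (|x| / 2) ^ 2 ≤ |y| ^ 2 := by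
                  apply pow_le_pow_left₀ (by positivity) h1
              _ = y ^ 2 := sq_abs y
        _ = (ν.withDensity fun y => ENNReal.ofReal (y ^ 2)) W :=
            (withDensity_apply _ hWopen.measurableSet).symm
        _ ≤ _ := measure_mono (fun y hy => hVU hy.1)
    intro hzero
    rw [hzero] at hle
    simp only [nonpos_iff_eq_zero, mul_eq_zero] at hle
    rcases hle with h | h
    · rw [ENNReal.ofReal_eq_zero] at h
      have : 0 < (|x| / 2) ^ 2 := by positivity
      linarith
    · exact hνW h
  · exact hsupp.diff (Set.finite_singleton 0)

lemma aux_pos_integral (μ : Measure ℝ)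
    (hsupp : {x : ℝ | ∀ U ∈ nhds x, μ U ≠ 0}.Infinite)
    (f : ℝ[X]) (hf : f ≠ 0) (hint : Integrable (fun x => f.eval x) μ)
    (hnn : ∀ x, 0 ≤ f.eval x) : 0 < ∫ x, f.eval x ∂μ := by
  have h0 : 0 ≤ ∫ x, f.eval x ∂μ := integral_nonneg hnn
  rcases h0.lt_or_eq with h | h
  · exact h
  · exfalso
    have hae : (fun x => f.eval x) =ᵐ[μ] 0 :=
      (integral_eq_zero_iff_of_nonneg hnn hint).mp h.symm
    have hN : μ {x | f.eval x ≠ 0} = 0 := by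
      have h2 := hae
      rw [Filter.EventuallyEq, ae_iff] at h2
      simpa using h2
    have hopen : IsOpen {x : ℝ | f.eval x ≠ 0} := by
      have : Continuous fun x : ℝ => f.eval x := f.continuous_aeval
      exact (isClosed_eq this continuous_const).isOpen_compl
    have hsub : {x : ℝ | ∀ U ∈ nhds x, μ U ≠ 0} ⊆ {x : ℝ | f.IsRoot x} := by
      intro x hx
      by_contra hne
      exact hx _ (hopen.mem_nhds hne) hN
    exact hsupp ((Polynomial.finite_setOf_isRoot hf).subset hsub)

/-- Gauss–Jacobi mechanical quadrature for a Lévy measure: if `ν` is a Lévy measure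
on `ℝ` with infinite (topological) support and finite moments of all orders `≥ 2`,
`γ(dx) = x² ν(dx)`, and `p` is a monic polynomial of degree `n ≥ 1` orthogonal to
`1, x, …, x^{n−1}` in `L²(γ)` with `p(0) ≠ 0`, then `p` has `n` distinct nonzero real
roots `a₁,…,aₙ` and there are `b₁,…,bₙ > 0` with
`∫ x^k ν(dx) = Σ_j b_j a_j^k` for `k = 2,…,2n+1`. -/
theorem gauss_jacobi_levy (ν : Measure ℝ) (hν0 : ν {0} = 0)
    (hνloc : ∫⁻ x, ENNReal.ofReal (min (x ^ 2) 1) ∂ν < ⊤)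
    (hsupp : {x : ℝ | ∀ U ∈ nhds x, ν U ≠ 0}.Infinite)
    (hmom : ∀ k : ℕ, 2 ≤ k → ∫⁻ x, ENNReal.ofReal (|x| ^ k) ∂ν < ⊤)
    (n : ℕ) (hn : 1 ≤ n) (p : Polynomial ℝ) (hmonic : p.Monic)
    (hdeg : p.natDegree = n)
    (horth : ∀ k < n, ∫ x, p.eval x * x ^ k
        ∂(ν.withDensity fun x => ENNReal.ofReal (x ^ 2)) = 0)
    (h0 : p.eval 0 ≠ 0) :
    ∃ a : Fin n → ℝ, Function.Injective a ∧ (∀ j, a j ≠ 0) ∧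
      p = ∏ j, (Polynomial.X - Polynomial.C (a j)) ∧
      ∃ b : Fin n → ℝ, (∀ j, 0 < b j) ∧
        ∀ k : ℕ, 2 ≤ k → k ≤ 2 * n + 1 →
          ∫ x, x ^ k ∂ν = ∑ j, b j * a j ^ k := by
  classical
  set γ : Measure ℝ := ν.withDensity fun x => ENNReal.ofReal (x ^ 2) with hγ
  have hintpoly : ∀ f : ℝ[X], Integrable (fun x => f.eval x) γ := aux_integrable_poly ν hmom
  have hγsupp := aux_gamma_supp ν hsupp
  have hpos : ∀ f : ℝ[X], f ≠ 0 → (∀ x, 0 ≤ f.eval x) → 0 < ∫ x, f.eval x ∂γ :=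
    fun f hf hnn => aux_pos_integral γ hγsupp f hf (hintpoly f) hnn
  have hp0 : p ≠ 0 := hmonic.ne_zero
  -- orthogonality against all polynomials of degree < n
  have horth' : ∀ q : ℝ[X], q.natDegree < n → ∫ x, p.eval x * q.eval x ∂γ = 0 := by
    intro q hq
    have hrepr : ∀ x : ℝ, p.eval x * q.eval x
        = ∑ k ∈ Finset.range n, q.coeff k * (p.eval x * x ^ k) := by
      intro x
      rw [Polynomial.eval_eq_sum_range' hq x, Finset.mul_sum]
      exact Finset.sum_congr rfl fun k _ => by ring
    have hint2 : ∀ k : ℕ, Integrable (fun x : ℝ => p.eval x * x ^ k) γ := by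
      intro k
      have := hintpoly (p * X ^ k)
      simpa [eval_mul, eval_pow] using this
    calc ∫ x, p.eval x * q.eval x ∂γ
        = ∫ x, ∑ k ∈ Finset.range n, q.coeff k * (p.eval x * x ^ k) ∂γ := by
          exact integral_congr_ae (Filter.Eventually.of_forall hrepr)
      _ = ∑ k ∈ Finset.range n, ∫ x, q.coeff k * (p.eval x * x ^ k) ∂γ :=
          integral_finset_sum _ (fun k _ => (hint2 k).const_mul _)
      _ = 0 := by
          apply Finset.sum_eq_zero
          intro k hk
          rw [integral_const_mul, horth k (Finset.mem_range.mp hk), mul_zero]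
  -- root structure
  set s : Finset ℝ := p.roots.toFinset with hs
  set t : Finset ℝ := s.filter (fun a => Odd (p.roots.count a)) with ht
  set q : ℝ[X] := ∏ a ∈ t, (X - C a) with hq
  have hq_monic : q.Monic := monic_prod_of_monic _ _ fun a _ => monic_X_sub_C a
  have hqdeg : q.natDegree = t.card := by
    rw [hq, natDegree_prod _ _ (fun a _ => X_sub_C_ne_zero a)]
    simp [natDegree_X_sub_C]
  have h1 : t.card ≤ s.card := Finset.card_filter_le _ _
  have h2 : s.card ≤ Multiset.card p.roots := Multiset.toFinset_card_le _
  have h3 : Multiset.card p.roots ≤ n := hdeg ▸ p.card_roots'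
  have htcard : t.card = n := by
    by_contra hne
    have hlt : t.card < n := lt_of_le_of_ne (h1.trans (h2.trans h3)) hne
    have hzero : ∫ x, p.eval x * q.eval x ∂γ = 0 := horth' q (by omega)
    have hposint : 0 < ∫ x, p.eval x * q.eval x ∂γ := by
      have := hpos (p * q) (mul_ne_zero hp0 hq_monic.ne_zero)
        (fun x => by rw [eval_mul, hq, ht, hs]; exact aux_pq_nonneg p hmonic x)
      simpa [eval_mul] using this
    rw [hzero] at hposint
    exact lt_irrefl 0 hposint
  have hscard : s.card = n := le_antisymm (h2.trans h3) (htcard ▸ h1)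
  have hrcard : Multiset.card p.roots = n := le_antisymm h3 (by
    calc n = s.card := hscard.symm
    _ ≤ _ := h2)
  have hnodup : p.roots.Nodup := by
    rw [← Multiset.toFinset_card_eq_card_iff_nodup]
    rw [← hs] at *
    omega
  -- enumeration of roots
  have hcards : Fintype.card {x // x ∈ s} = n := by rw [Fintype.card_coe, hscard]
  set e : {x // x ∈ s} ≃ Fin n := Fintype.equivFinOfCardEq hcards with he
  set a : Fin n → ℝ := fun j => (e.symm j : ℝ) with ha
  have ha_inj : Function.Injective a := fun i j h =>
    e.symm.injective (Subtype.coe_injective h)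
  have ha_mem : ∀ j, a j ∈ s := fun j => (e.symm j).2
  have hroot : ∀ j, p.eval (a j) = 0 := by
    intro j
    have := Multiset.mem_toFinset.mp (ha_mem j)
    exact (mem_roots hp0).mp this
  have ha0 : ∀ j, a j ≠ 0 := fun j hj => h0 (hj ▸ hroot j)
  -- p as a product
  have hprod : p = ∏ j, (X - C (a j)) := by
    have h4 : (p.roots.map fun a => X - C a).prod = p :=
      prod_multiset_X_sub_C_of_monic_of_roots_card_eq hmonic (by rw [hrcard, hdeg])
    have h5 : p.roots = s.val := by
      rw [hs, Multiset.toFinset_val, Multiset.dedup_eq_self.mpr hnodup]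
    have h6 : (p.roots.map fun a => X - C a).prod = ∏ x ∈ s, (X - C x) := by
      rw [h5]; rfl
    have h7 : ∏ x ∈ s, (X - C x) = ∏ j, (X - C (a j)) := by
      rw [← Finset.prod_coe_sort s (fun x => X - C x)]
      rw [← Equiv.prod_comp e.symm (fun i : {x // x ∈ s} => X - C (i : ℝ))]
    rw [← h4, h6, h7]
  -- quadrature weights
  set w : Fin n → ℝ := fun j => ∫ x, (Lagrange.basis Finset.univ a j).eval x ∂γ with hw
  have hinjOn : Set.InjOn a (Finset.univ : Finset (Fin n)) := ha_inj.injOn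
  have hcardu : (Finset.univ : Finset (Fin n)).card = n := by simp
  -- exactness of the quadrature rule up to degree 2n-1
  have hE : ∀ f : ℝ[X], f.natDegree < 2 * n →
      ∫ x, f.eval x ∂γ = ∑ j, w j * f.eval (a j) := by
    intro f hfdeg
    have hfq : (f /ₘ p).natDegree < n := by
      rw [natDegree_divByMonic f hmonic, hdeg]; omega
    have hfr_deg : (f %ₘ p).degree < ((Finset.univ : Finset (Fin n)).card : WithBot ℕ) := by
      rw [hcardu]
      calc (f %ₘ p).degree < p.degree := degree_modByMonic_lt f hmonic
      _ = (n : WithBot ℕ) := by rw [degree_eq_natDegree hp0, hdeg]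
    have hsplit : ∀ x : ℝ, f.eval x = p.eval x * (f /ₘ p).eval x + (f %ₘ p).eval x := by
      intro x
      conv_lhs => rw [← modByMonic_add_div f p]
      rw [eval_add, eval_mul]
      ring
    have hint1 : ∫ x, f.eval x ∂γ = ∫ x, (f %ₘ p).eval x ∂γ := by
      calc ∫ x, f.eval x ∂γ
          = ∫ x, (p.eval x * (f /ₘ p).eval x + (f %ₘ p).eval x) ∂γ :=
            integral_congr_ae (Filter.Eventually.of_forall hsplit)
        _ = (∫ x, p.eval x * (f /ₘ p).eval x ∂γ) + ∫ x, (f %ₘ p).eval x ∂γ :=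
            integral_add (by simpa [eval_mul] using hintpoly (p * (f /ₘ p))) (hintpoly _)
        _ = ∫ x, (f %ₘ p).eval x ∂γ := by rw [horth' _ hfq, zero_add]
    have hr_interp : (f %ₘ p)
        = ∑ j, Polynomial.C ((f %ₘ p).eval (a j)) * Lagrange.basis Finset.univ a j := by
      conv_lhs => rw [Lagrange.eq_interpolate hinjOn hfr_deg]
      rw [Lagrange.interpolate_apply]
    have hint3 : ∫ x, (f %ₘ p).eval x ∂γ = ∑ j, w j * (f %ₘ p).eval (a j) := by
      conv_lhs => rw [hr_interp]
      have heval : ∀ x : ℝ, (∑ j, Polynomial.C ((f %ₘ p).eval (a j))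
          * Lagrange.basis Finset.univ a j).eval x
          = ∑ j, (f %ₘ p).eval (a j) * (Lagrange.basis Finset.univ a j).eval x := by
        intro x
        rw [eval_finset_sum]
        exact Finset.sum_congr rfl fun j _ => by rw [eval_mul, eval_C]
      calc ∫ x, (∑ j, Polynomial.C ((f %ₘ p).eval (a j))
            * Lagrange.basis Finset.univ a j).eval x ∂γ
          = ∫ x, ∑ j, (f %ₘ p).eval (a j) * (Lagrange.basis Finset.univ a j).eval x ∂γ :=
            integral_congr_ae (Filter.Eventually.of_forall heval)
        _ = ∑ j, ∫ x, (f %ₘ p).eval (a j) * (Lagrange.basis Finset.univ a j).eval x ∂γ :=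
            integral_finset_sum _ (fun j _ => (hintpoly _).const_mul _)
        _ = ∑ j, w j * (f %ₘ p).eval (a j) := by
            refine Finset.sum_congr rfl fun j _ => ?_
            rw [integral_const_mul, mul_comm]
    have hval : ∀ j, (f %ₘ p).eval (a j) = f.eval (a j) := by
      intro j
      rw [hsplit (a j), hroot j, zero_mul, zero_add]
    rw [hint1, hint3]
    exact Finset.sum_congr rfl fun j _ => by rw [hval]
  -- positivity of the weights
  have hwpos : ∀ j, 0 < w j := by
    intro j
    set B : ℝ[X] := Lagrange.basis Finset.univ a j with hB
    have hBdeg : B.natDegree = n - 1 := by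
      rw [hB, Lagrange.natDegree_basis hinjOn (Finset.mem_univ j), hcardu]
    have hB2deg : (B ^ 2).natDegree < 2 * n := by
      rw [natDegree_pow, hBdeg]; omega
    have hEB := hE (B ^ 2) hB2deg
    have hsum : ∑ i, w i * (B ^ 2).eval (a i) = w j := by
      rw [Finset.sum_eq_single j]
      · rw [eval_pow, hB, Lagrange.eval_basis_self hinjOn (Finset.mem_univ j)]
        norm_num
      · intro i _ hij
        rw [eval_pow, hB, Lagrange.eval_basis_of_ne hij.symm (Finset.mem_univ i)]
        norm_num
      · intro h; exact absurd (Finset.mem_univ j) h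
    have hposB : 0 < ∫ x, (B ^ 2).eval x ∂γ := by
      apply hpos (B ^ 2) (pow_ne_zero 2 (Lagrange.basis_ne_zero hinjOn (Finset.mem_univ j)))
      intro x
      rw [eval_pow]
      positivity
    rw [hEB, hsum] at hposB
    exact hposB
  -- assemble
  refine ⟨a, ha_inj, ha0, hprod, fun j => w j / (a j) ^ 2, ?_, ?_⟩
  · intro j
    have := hwpos j
    have h9 : (0:ℝ) < (a j) ^ 2 := by have := ha0 j; positivity
    positivity
  · intro k hk2 hk
    have hXdeg : ((X : ℝ[X]) ^ (k - 2)).natDegree < 2 * n := by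
      rw [natDegree_X_pow]; omega
    have hEX := hE (X ^ (k - 2)) hXdeg
    have hconv : ∫ x, x ^ k ∂ν = ∫ x, ((X : ℝ[X]) ^ (k - 2)).eval x ∂γ := by
      rw [hγ, aux_integral_gamma ν]
      apply integral_congr_ae (Filter.Eventually.of_forall ?_)
      intro x
      simp only [eval_pow, eval_X]
      rw [← pow_add]
      congr 1
      omega
    rw [hconv, hEX]
    refine Finset.sum_congr rfl fun j _ => ?_
    simp only [eval_pow, eval_X]
    have ha2 : (a j) ^ 2 ≠ 0 := pow_ne_zero 2 (ha0 j)
    have hak : a j ^ k = a j ^ (k - 2) * a j ^ 2 := by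
      rw [← pow_add]
      congr 1
      omega
    rw [hak]
    rw [div_mul_eq_mul_div, eq_div_iff ha2]
    ring
end

section
/- Let σ > 0 and let ν be a Lévy measure on ℝ with infinite support and ∫ |x|^k ν(dx) < ∞ for all k ≥ 2; set γ(dx) = x² ν(dx) and γ^σ(dx) = σ² δ_0(dx) + x² ν(dx). For each k, let p_k be the monic k-th orthogonal polynomial with respect to γ and p_k^σ the monic k-th orthogonal polynomial with respect to γ^σ. If p_n(0) ≠ 0, then there exist real numbers λ_n and λ_{n−1} such that p_{n+1}^σ(x) = x p_n(x) − λ_n p_n^σ(x) − λ_{n−1} p_{n−1}^σ(x). -/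
open MeasureTheory Polynomial ENNReal

lemma integrable_dirac' {f : ℝ → ℝ} (hf : Continuous f) (a : ℝ) :
    Integrable f (Measure.dirac a) := by
  refine ⟨hf.aestronglyMeasurable, ?_⟩
  rw [HasFiniteIntegral, lintegral_dirac]
  exact ENNReal.coe_lt_top

lemma integrable_pow_wd (ν : Measure ℝ)
    (hmom : ∀ k : ℕ, 2 ≤ k → ∫⁻ x, ENNReal.ofReal (|x| ^ k) ∂ν < ⊤) (k : ℕ) :
    Integrable (fun x => x ^ k) (ν.withDensity fun x => ENNReal.ofReal (x ^ 2)) := by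
  refine ⟨(continuous_pow k).aestronglyMeasurable, ?_⟩
  rw [HasFiniteIntegral, lintegral_withDensity_eq_lintegral_mul _
    (by measurability) (by measurability)]
  have : ∀ x : ℝ, ENNReal.ofReal (x ^ 2) * ‖x ^ k‖ₑ
      = ENNReal.ofReal (|x| ^ (k + 2)) := by
    intro x
    rw [← ofReal_norm_eq_enorm, ← ENNReal.ofReal_mul (sq_nonneg x)]
    congr 1
    rw [norm_pow, Real.norm_eq_abs, ← sq_abs, pow_add]
    ring
  simp only [Pi.mul_apply, this]
  exact hmom (k + 2) (by omega)

lemma integrable_poly_wd (ν : Measure ℝ)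
    (hmom : ∀ k : ℕ, 2 ≤ k → ∫⁻ x, ENNReal.ofReal (|x| ^ k) ∂ν < ⊤) (f : ℝ[X]) :
    Integrable (fun x => f.eval x) (ν.withDensity fun x => ENNReal.ofReal (x ^ 2)) := by
  have : (fun x => f.eval x) = fun x =>
      ∑ i ∈ Finset.range (f.natDegree + 1), f.coeff i * x ^ i := by
    funext x; exact f.eval_eq_sum_range x
  rw [this]
  exact MeasureTheory.integrable_finset_sum _ fun i _ =>
    (integrable_pow_wd ν hmom i).const_mul _

lemma integrable_poly_sig (σ : ℝ) (ν : Measure ℝ)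
    (hmom : ∀ k : ℕ, 2 ≤ k → ∫⁻ x, ENNReal.ofReal (|x| ^ k) ∂ν < ⊤) (f : ℝ[X]) :
    Integrable (fun x => f.eval x)
      (ENNReal.ofReal (σ ^ 2) • Measure.dirac (0 : ℝ) +
        ν.withDensity fun x => ENNReal.ofReal (x ^ 2)) := by
  rw [integrable_add_measure]
  exact ⟨(integrable_dirac' f.continuous 0).smul_measure ENNReal.ofReal_ne_top,
    integrable_poly_wd ν hmom f⟩

lemma integral_poly_sig (σ : ℝ) (ν : Measure ℝ)
    (hmom : ∀ k : ℕ, 2 ≤ k → ∫⁻ x, ENNReal.ofReal (|x| ^ k) ∂ν < ⊤) (f : ℝ[X]) :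
    ∫ x, f.eval x ∂(ENNReal.ofReal (σ ^ 2) • Measure.dirac (0 : ℝ) +
        ν.withDensity fun x => ENNReal.ofReal (x ^ 2))
      = (σ ^ 2) * f.eval 0 +
        ∫ x, f.eval x ∂(ν.withDensity fun x => ENNReal.ofReal (x ^ 2)) := by
  rw [integral_add_measure
    ((integrable_dirac' f.continuous 0).smul_measure ENNReal.ofReal_ne_top)
    (integrable_poly_wd ν hmom f), integral_smul_measure, integral_dirac]
  rw [ENNReal.toReal_ofReal (sq_nonneg σ)]
  rfl

lemma poly_zero_of_ae (ν : Measure ℝ)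
    (hsupp : {x : ℝ | ∀ U ∈ nhds x, ν U ≠ 0}.Infinite) (f : ℝ[X])
    (hae : ∀ᵐ x ∂(ν.withDensity fun x => ENNReal.ofReal (x ^ 2)), f.eval x = 0) :
    f = 0 := by
  by_contra hf
  have hZ : ({x : ℝ | f.IsRoot x} ∪ {0}).Finite :=
    (f.finite_setOf_isRoot hf).union (Set.finite_singleton 0)
  obtain ⟨y, hy, hyZ⟩ := (hsupp.diff hZ).nonempty
  have hy0 : y ≠ 0 := fun h => hyZ (Or.inr h)
  have hyr : f.eval y ≠ 0 := fun h => hyZ (Or.inl h)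
  have hV : IsOpen {x : ℝ | f.eval x ≠ 0} :=
    isOpen_ne.preimage f.continuous
  obtain ⟨ε, hε, hball⟩ := Metric.isOpen_iff.1 hV y hyr
  set r := min ε (|y| / 2) with hr
  have hrpos : 0 < r := lt_min hε (by positivity)
  have hsub : Metric.ball y r ⊆ {x : ℝ | f.eval x ≠ 0} :=
    (Metric.ball_subset_ball (min_le_left _ _)).trans hball
  have hlow : ∀ x ∈ Metric.ball y r, ENNReal.ofReal ((|y| / 2) ^ 2)
      ≤ ENNReal.ofReal (x ^ 2) := by
    intro x hx
    apply ENNReal.ofReal_le_ofReal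
    rw [← sq_abs x]
    apply pow_le_pow_left₀ (by positivity)
    have hd : |x - y| < |y| / 2 := by
      have h1 : dist x y < r := hx
      rw [Real.dist_eq] at h1
      exact h1.trans_le (min_le_right _ _)
    have := abs_sub_abs_le_abs_sub y x
    rw [abs_sub_comm] at this
    linarith
  have hμU : (ν.withDensity fun x => ENNReal.ofReal (x ^ 2)) (Metric.ball y r) = 0 := by
    have h0 : (ν.withDensity fun x => ENNReal.ofReal (x ^ 2))
        {x : ℝ | f.eval x ≠ 0} = 0 := hae
    exact measure_mono_null hsub h0
  rw [withDensity_apply _ measurableSet_ball] at hμU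
  have hle : ENNReal.ofReal ((|y| / 2) ^ 2) * ν (Metric.ball y r)
      ≤ ∫⁻ x in Metric.ball y r, ENNReal.ofReal (x ^ 2) ∂ν := by
    rw [← setLIntegral_const]
    exact setLIntegral_mono (by measurability) hlow
  rw [hμU, nonpos_iff_eq_zero, mul_eq_zero] at hle
  rcases hle with h | h
  · rw [ENNReal.ofReal_eq_zero] at h
    have : (0:ℝ) < (|y| / 2) ^ 2 := by positivity
    linarith
  · exact hy _ (Metric.ball_mem_nhds y hrpos) h

lemma intS_integrable (σ : ℝ) (ν : Measure ℝ)
    (hmom : ∀ k : ℕ, 2 ≤ k → ∫⁻ x, ENNReal.ofReal (|x| ^ k) ∂ν < ⊤) (a : ℝ[X]) (k : ℕ) :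
    Integrable (fun x => a.eval x * x ^ k)
      (ENNReal.ofReal (σ ^ 2) • Measure.dirac (0 : ℝ) +
        ν.withDensity fun x => ENNReal.ofReal (x ^ 2)) := by
  have := integrable_poly_sig σ ν hmom (a * X ^ k)
  simpa [eval_mul] using this

lemma intS_sub (σ : ℝ) (ν : Measure ℝ)
    (hmom : ∀ k : ℕ, 2 ≤ k → ∫⁻ x, ENNReal.ofReal (|x| ^ k) ∂ν < ⊤) (a b : ℝ[X]) (k : ℕ) :
    ∫ x, (a - b).eval x * x ^ k
        ∂(ENNReal.ofReal (σ ^ 2) • Measure.dirac (0 : ℝ) +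
          ν.withDensity fun x => ENNReal.ofReal (x ^ 2))
      = (∫ x, a.eval x * x ^ k
          ∂(ENNReal.ofReal (σ ^ 2) • Measure.dirac (0 : ℝ) +
            ν.withDensity fun x => ENNReal.ofReal (x ^ 2)))
        - ∫ x, b.eval x * x ^ k
          ∂(ENNReal.ofReal (σ ^ 2) • Measure.dirac (0 : ℝ) +
            ν.withDensity fun x => ENNReal.ofReal (x ^ 2)) := by
  simp only [eval_sub, sub_mul]
  exact integral_sub (intS_integrable σ ν hmom a k) (intS_integrable σ ν hmom b k)

lemma intS_Cmul (σ : ℝ) (ν : Measure ℝ) (c : ℝ) (b : ℝ[X]) (k : ℕ) :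
    ∫ x, (C c * b).eval x * x ^ k
        ∂(ENNReal.ofReal (σ ^ 2) • Measure.dirac (0 : ℝ) +
          ν.withDensity fun x => ENNReal.ofReal (x ^ 2))
      = c * ∫ x, b.eval x * x ^ k
          ∂(ENNReal.ofReal (σ ^ 2) • Measure.dirac (0 : ℝ) +
            ν.withDensity fun x => ENNReal.ofReal (x ^ 2)) := by
  simp only [eval_mul, eval_C, mul_assoc]
  exact integral_const_mul c _


/-- Let `σ > 0` and `ν` be a Lévy measure with infinite support and finite moments of
all orders `≥ 2`; set `γ(dx) = x² ν(dx)` and `γ^σ = σ²δ₀ + γ`. If `p` is the monic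
`n`-th orthogonal polynomial for `γ`, `q₁, q₂, q₃` are the monic orthogonal
polynomials of degrees `n+1, n, n−1` for `γ^σ`, and `p(0) ≠ 0`, then there exist
`λₙ, λₙ₋₁ ∈ ℝ` with `q₁(x) = x p(x) − λₙ q₂(x) − λₙ₋₁ q₃(x)`. -/
theorem teugels_recurrence (σ : ℝ) (hσ : 0 < σ) (ν : Measure ℝ) (hν0 : ν {0} = 0)
    (hsupp : {x : ℝ | ∀ U ∈ nhds x, ν U ≠ 0}.Infinite)
    (hmom : ∀ k : ℕ, 2 ≤ k → ∫⁻ x, ENNReal.ofReal (|x| ^ k) ∂ν < ⊤)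
    (n : ℕ) (hn : 1 ≤ n)
    (p : Polynomial ℝ) (hp : p.Monic) (hpd : p.natDegree = n)
    (hporth : ∀ k < n, ∫ x, p.eval x * x ^ k
        ∂(ν.withDensity fun x => ENNReal.ofReal (x ^ 2)) = 0)
    (h0 : p.eval 0 ≠ 0)
    (q1 q2 q3 : Polynomial ℝ)
    (hq1 : q1.Monic) (hq1d : q1.natDegree = n + 1)
    (hq1orth : ∀ k < n + 1, ∫ x, q1.eval x * x ^ k
        ∂(ENNReal.ofReal (σ ^ 2) • Measure.dirac (0 : ℝ) +
          ν.withDensity fun x => ENNReal.ofReal (x ^ 2)) = 0)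
    (hq2 : q2.Monic) (hq2d : q2.natDegree = n)
    (hq2orth : ∀ k < n, ∫ x, q2.eval x * x ^ k
        ∂(ENNReal.ofReal (σ ^ 2) • Measure.dirac (0 : ℝ) +
          ν.withDensity fun x => ENNReal.ofReal (x ^ 2)) = 0)
    (hq3 : q3.Monic) (hq3d : q3.natDegree = n - 1)
    (hq3orth : ∀ k < n - 1, ∫ x, q3.eval x * x ^ k
        ∂(ENNReal.ofReal (σ ^ 2) • Measure.dirac (0 : ℝ) +
          ν.withDensity fun x => ENNReal.ofReal (x ^ 2)) = 0) :
    ∃ l1 l2 : ℝ,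
      q1 = Polynomial.X * p - Polynomial.C l1 * q2 - Polynomial.C l2 * q3 := by
  classical
  set μσ := ENNReal.ofReal (σ ^ 2) • Measure.dirac (0 : ℝ) +
      ν.withDensity fun x => ENNReal.ofReal (x ^ 2) with hμσ
  -- the remainder polynomial
  set r : ℝ[X] := X * p - q1 with hrdef
  set c1 : ℝ := r.coeff n with hc1
  set s1 : ℝ[X] := r - C c1 * q2 with hs1def
  set c2 : ℝ := s1.coeff (n - 1) with hc2
  set s : ℝ[X] := s1 - C c2 * q3 with hsdef
  refine ⟨c1, c2, ?_⟩
  suffices hs0 : s = 0 by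
    rw [hsdef, hs1def, hrdef] at hs0
    linear_combination -hs0
  -- degree bookkeeping
  have hXp : (X * p).Monic := (monic_X).mul hp
  have hXpd : (X * p).natDegree = n + 1 := by
    rw [natDegree_mul X_ne_zero hp.ne_zero, natDegree_X, hpd]; omega
  have hrdeg : r.degree < ((n + 1 : ℕ) : WithBot ℕ) := by
    have hdeq : (X * p).degree = q1.degree := by
      rw [degree_eq_natDegree hXp.ne_zero, degree_eq_natDegree hq1.ne_zero, hXpd, hq1d]
    have := degree_sub_lt hdeq hXp.ne_zero
      (hXp.leadingCoeff.trans hq1.leadingCoeff.symm)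
    rwa [degree_eq_natDegree hXp.ne_zero, hXpd] at this
  have hrcoeff : ∀ m, n < m → r.coeff m = 0 := by
    intro m hm
    apply coeff_eq_zero_of_degree_lt
    exact hrdeg.trans_le (by exact_mod_cast Nat.succ_le_of_lt hm)
  have hs1coeff : ∀ m, n ≤ m → s1.coeff m = 0 := by
    intro m hm
    rw [hs1def, coeff_sub, coeff_C_mul]
    rcases eq_or_lt_of_le hm with h | h
    · rw [← h, ← hc1, ← hq2d, hq2.coeff_natDegree]; ring
    · rw [hrcoeff m h, coeff_eq_zero_of_natDegree_lt (by omega : q2.natDegree < m)]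
      ring
  have hscoeff : ∀ m, n - 1 ≤ m → s.coeff m = 0 := by
    intro m hm
    rw [hsdef, coeff_sub, coeff_C_mul]
    rcases eq_or_lt_of_le hm with h | h
    · rw [← h, ← hc2, ← hq3d, hq3.coeff_natDegree]; ring
    · rw [hs1coeff m (by omega), coeff_eq_zero_of_natDegree_lt (by omega : q3.natDegree < m)]
      ring
  have hsdeg : s.degree < ((n - 1 : ℕ) : WithBot ℕ) :=
    (degree_lt_iff_coeff_zero s _).2 (fun m hm => hscoeff m (by exact_mod_cast hm))
  -- orthogonality of s
  have hXporth : ∀ k < n - 1, ∫ x, (X * p).eval x * x ^ k ∂μσ = 0 := by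
    intro k hk
    have heq : ∀ x : ℝ, (X * p).eval x * x ^ k = (p * X ^ (k + 1)).eval x := by
      intro x; simp [eval_mul, pow_succ]; ring
    calc ∫ x, (X * p).eval x * x ^ k ∂μσ
        = ∫ x, (p * X ^ (k + 1)).eval x ∂μσ := by simp_rw [heq]
      _ = σ ^ 2 * (p * X ^ (k + 1)).eval 0 +
            ∫ x, (p * X ^ (k + 1)).eval x
              ∂(ν.withDensity fun x => ENNReal.ofReal (x ^ 2)) :=
          integral_poly_sig σ ν hmom _
      _ = 0 := by
          rw [eval_mul, eval_pow, eval_X, zero_pow (Nat.succ_ne_zero k)]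
          simp only [mul_zero, zero_add]
          have : ∀ x : ℝ, (p * X ^ (k + 1)).eval x = p.eval x * x ^ (k + 1) := by
            intro x; simp [eval_mul]
          simp_rw [this]
          exact hporth (k + 1) (by omega)
  have hsorth : ∀ k < n - 1, ∫ x, s.eval x * x ^ k ∂μσ = 0 := by
    intro k hk
    rw [hsdef, intS_sub σ ν hmom, intS_Cmul σ ν, hs1def, intS_sub σ ν hmom,
      intS_Cmul σ ν, hrdef, intS_sub σ ν hmom]
    rw [hXporth k hk, hq1orth k (by omega), hq2orth k (by omega), hq3orth k hk]
    ring
  -- s is orthogonal to itself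
  by_cases hs : s = 0
  · exact hs
  exfalso
  have hsnd : s.natDegree < n - 1 := by
    rwa [← natDegree_lt_iff_degree_lt hs] at hsdeg
  have hsq : ∫ x, s.eval x * s.eval x ∂μσ = 0 := by
    have heq : ∀ x : ℝ, s.eval x * s.eval x
        = ∑ k ∈ Finset.range (s.natDegree + 1), s.coeff k * (s.eval x * x ^ k) := by
      intro x
      calc s.eval x * s.eval x
          = (∑ k ∈ Finset.range (s.natDegree + 1), s.coeff k * x ^ k) * s.eval x := by
            rw [← s.eval_eq_sum_range x]
        _ = _ := by
            rw [Finset.sum_mul]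
            exact Finset.sum_congr rfl fun k _ => by ring
    simp_rw [heq]
    rw [integral_finset_sum _ (fun k _ => (intS_integrable σ ν hmom s k).const_mul _)]
    apply Finset.sum_eq_zero
    intro k hk
    rw [integral_const_mul, hsorth k (by
      have := Finset.mem_range.1 hk; omega)]
    ring
  have hae : ∀ᵐ x ∂μσ, s.eval x * s.eval x = 0 := by
    have hnn : (0 : ℝ → ℝ) ≤ fun x => s.eval x * s.eval x :=
      fun x => mul_self_nonneg _
    have hint : Integrable (fun x => s.eval x * s.eval x) μσ := by
      have := integrable_poly_sig σ ν hmom (s * s)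
      simp only [eval_mul] at this
      exact this
    exact (integral_eq_zero_iff_of_nonneg hnn hint).1 hsq
  have haeμ : ∀ᵐ x ∂(ν.withDensity fun x => ENNReal.ofReal (x ^ 2)), s.eval x = 0 := by
    have hle : (ν.withDensity fun x => ENNReal.ofReal (x ^ 2)) ≤ μσ :=
      Measure.le_add_left le_rfl
    filter_upwards [ae_mono hle hae] with x hx
    exact mul_self_eq_zero.1 hx
  exact hs (poly_zero_of_ae ν hsupp s haeμ)
end

section
/- Let a_1,…,a_n be distinct nonzero real numbers and P(x) = ∏_{j=1}^n (x − a_j). Then for every (x_1,…,x_{n+1}) ∈ ℝ^{n+1}: P_{n+1}(x_1,…,x_{n+1}) − J^a_{n+1}(x_1,…,x_n) = ((−1)^n/(n+1)) · L(P)(x_1,…,x_{n+1}). In particular, P_{n+1}(1, x, x²,…, x^n) − J^a_{n+1}(1, x,…, x^{n−1}) = ((−1)^n/(n+1)) P(x) for every x ∈ ℝ. -/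
/-- For `P(x) = c₀ + c₁ x + ⋯ + cₘ xᵐ` of degree `m`,
`L(P)(x₁,…,x_{m+1}) = c₀ x₁ + ⋯ + cₘ x_{m+1}` (arguments indexed from 1). -/
noncomputable def Lpoly (P : Polynomial ℝ) (x : ℕ → ℝ) : ℝ :=
  ∑ i ∈ Finset.range (P.natDegree + 1), P.coeff i * x (i + 1)

lemma KS_eq_of_eq (x x' : ℕ → ℝ) :
    ∀ m, (∀ k, 1 ≤ k → k ≤ m → x k = x' k) → KS x m = KS x' m := by
  intro m
  induction m using Nat.strong_induction_on with
  | _ m ih =>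
    intro h
    match m with
    | 0 => rw [KS, KS]
    | n + 1 =>
      rw [KS, KS]
      congr 1
      apply Finset.sum_congr rfl
      intro j hj
      simp only [Finset.mem_range] at hj
      rw [ih (n - j) (by omega) (fun k h1 h2 => h k h1 (by omega)),
          h (j + 1) (by omega) (by omega)]

lemma KS_diff (n : ℕ) (x x' : ℕ → ℝ)
    (h : ∀ k, 1 ≤ k → k ≤ n → x k = x' k) :
    KS x (n + 1) - KS x' (n + 1)
      = ((-1 : ℝ) ^ n / (n + 1)) * (x (n + 1) - x' (n + 1)) := by
  rw [KS, KS, Finset.sum_range_succ, Finset.sum_range_succ]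
  have hsum : ∑ j ∈ Finset.range n, ((-1 : ℝ) ^ j * KS x (n - j) * x (j + 1))
      = ∑ j ∈ Finset.range n, ((-1 : ℝ) ^ j * KS x' (n - j) * x' (j + 1)) := by
    apply Finset.sum_congr rfl
    intro j hj
    simp only [Finset.mem_range] at hj
    rw [KS_eq_of_eq x x' (n - j) (fun k h1 h2 => h k h1 (by omega)),
        h (j + 1) (by omega) (by omega)]
  have h0 : n - n = 0 := by omega
  have hKS0 : ∀ z : ℕ → ℝ, KS z 0 = 1 := fun z => by rw [KS]
  rw [h0, hKS0, hKS0, hsum, Rat.smul_def, Rat.smul_def]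
  push_cast
  ring

lemma key_lpoly (n : ℕ) (a : Fin n → ℝ) (x : ℕ → ℝ) (y : Fin n → ℝ)
    (hx : ∀ k, 1 ≤ k → k ≤ n → x k = ∑ j, a j ^ k * y j) :
    x (n + 1) - ∑ j, a j ^ (n + 1) * y j
      = Lpoly (∏ j, (Polynomial.X - Polynomial.C (a j))) x := by
  set P : Polynomial ℝ := ∏ j, (Polynomial.X - Polynomial.C (a j)) with hPdef
  have hP : P.Monic := Polynomial.monic_prod_of_monic _ _
    fun j _ => Polynomial.monic_X_sub_C _
  have hdeg : P.natDegree = n := by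
    rw [hPdef, Polynomial.natDegree_prod_of_monic _ _
      fun j _ => Polynomial.monic_X_sub_C _]
    simp
  have hroot : ∀ j : Fin n, P.eval (a j) = 0 := by
    intro j
    rw [hPdef, Polynomial.eval_prod]
    exact Finset.prod_eq_zero (Finset.mem_univ j) (by simp)
  have hinner : ∀ j : Fin n,
      ∑ i ∈ Finset.range n, P.coeff i * a j ^ (i + 1) = -(a j ^ (n + 1)) := by
    intro j
    have he : ∑ i ∈ Finset.range (n + 1), P.coeff i * a j ^ i = 0 := by
      have := Polynomial.eval_eq_sum_range (x := a j) (p := P)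
      rw [hroot j, hdeg] at this
      exact this.symm
    rw [Finset.sum_range_succ] at he
    have hcn : P.coeff n = 1 := by
      have := hP.coeff_natDegree
      rwa [hdeg] at this
    have : ∑ i ∈ Finset.range n, P.coeff i * a j ^ i = -(a j ^ n) := by
      rw [hcn] at he; linarith
    calc ∑ i ∈ Finset.range n, P.coeff i * a j ^ (i + 1)
        = (∑ i ∈ Finset.range n, P.coeff i * a j ^ i) * a j := by
          rw [Finset.sum_mul]; apply Finset.sum_congr rfl; intro i _; ring
      _ = -(a j ^ (n + 1)) := by rw [this]; ring
  have hcn : P.coeff n = 1 := by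
    have := hP.coeff_natDegree
    rwa [hdeg] at this
  rw [Lpoly, hdeg, Finset.sum_range_succ, hcn, one_mul]
  have hlow : ∑ i ∈ Finset.range n, P.coeff i * x (i + 1)
      = -(∑ j, a j ^ (n + 1) * y j) := by
    calc ∑ i ∈ Finset.range n, P.coeff i * x (i + 1)
        = ∑ i ∈ Finset.range n, ∑ j, P.coeff i * (a j ^ (i + 1) * y j) := by
          apply Finset.sum_congr rfl
          intro i hi
          simp only [Finset.mem_range] at hi
          rw [hx (i + 1) (by omega) (by omega), Finset.mul_sum]
      _ = ∑ j, ∑ i ∈ Finset.range n, P.coeff i * (a j ^ (i + 1) * y j) :=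
          Finset.sum_comm
      _ = ∑ j, (∑ i ∈ Finset.range n, P.coeff i * a j ^ (i + 1)) * y j := by
          apply Finset.sum_congr rfl
          intro j _
          rw [Finset.sum_mul]
          apply Finset.sum_congr rfl
          intro i _; ring
      _ = -(∑ j, a j ^ (n + 1) * y j) := by
          rw [← Finset.sum_neg_distrib]
          apply Finset.sum_congr rfl
          intro j _
          rw [hinner j]; ring
  rw [hlow]; ring

/-- Let `a₁,…,aₙ` be distinct nonzero reals and `P(x) = ∏_j (x − a_j)`. For
`(x₁,…,x_{n+1}) ∈ ℝ^{n+1}`, with `(y_j)` the (unique) solution of the Vandermonde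
system `x_k = Σ_j a_j^k y_j` (`k = 1,…,n`), `u_{n+1} = Σ_j a_j^{n+1} y_j` and
`J^a_{n+1}(x₁,…,xₙ) = P_{n+1}(x₁,…,xₙ,u_{n+1})`:
`P_{n+1}(x₁,…,x_{n+1}) − J^a_{n+1}(x₁,…,xₙ) = ((−1)ⁿ/(n+1)) L(P)(x₁,…,x_{n+1})`;
in particular `P_{n+1}(1,x,…,xⁿ) − J^a_{n+1}(1,x,…,x^{n−1}) = ((−1)ⁿ/(n+1)) P(x)`. -/
theorem kailathSegall_minus_J (n : ℕ) (a : Fin n → ℝ)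
    (ha : Function.Injective a) (ha0 : ∀ j, a j ≠ 0) :
    (∀ x : ℕ → ℝ, ∀ y : Fin n → ℝ,
      (∀ k, 1 ≤ k → k ≤ n → x k = ∑ j, a j ^ k * y j) →
      KS x (n + 1) -
          KS (fun k => if k = n + 1 then ∑ j, a j ^ (n + 1) * y j else x k) (n + 1) =
        ((-1 : ℝ) ^ n / (n + 1)) *
          Lpoly (∏ j, (Polynomial.X - Polynomial.C (a j))) x) ∧
    (∀ x0 : ℝ, ∀ y : Fin n → ℝ,
      (∀ k, 1 ≤ k → k ≤ n → x0 ^ (k - 1) = ∑ j, a j ^ k * y j) →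
      KS (fun k => x0 ^ (k - 1)) (n + 1) -
          KS (fun k => if k = n + 1 then ∑ j, a j ^ (n + 1) * y j
            else x0 ^ (k - 1)) (n + 1) =
        ((-1 : ℝ) ^ n / (n + 1)) *
          Polynomial.eval x0 (∏ j, (Polynomial.X - Polynomial.C (a j)))) := by
  constructor
  · intro x y hx
    have hd := KS_diff n x
      (fun k => if k = n + 1 then ∑ j, a j ^ (n + 1) * y j else x k)
      (fun k h1 h2 => by simp [Nat.ne_of_lt (by omega : k < n + 1)])
    simp only [if_pos rfl, if_true] at hd
    rw [hd, key_lpoly n a x y hx]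
  · intro x0 y hx
    have hd := KS_diff n (fun k => x0 ^ (k - 1))
      (fun k => if k = n + 1 then ∑ j, a j ^ (n + 1) * y j else x0 ^ (k - 1))
      (fun k h1 h2 => by simp [Nat.ne_of_lt (by omega : k < n + 1)])
    simp only [if_pos rfl, if_true] at hd
    rw [hd, key_lpoly n a (fun k => x0 ^ (k - 1)) y hx]
    congr 1
    set P : Polynomial ℝ := ∏ j, (Polynomial.X - Polynomial.C (a j)) with hPdef
    have hdeg : P.natDegree = n := by
      rw [hPdef, Polynomial.natDegree_prod_of_monic _ _
        fun j _ => Polynomial.monic_X_sub_C _]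
      simp
    rw [Lpoly, hdeg, Polynomial.eval_eq_sum_range, hdeg]
    apply Finset.sum_congr rfl
    intro i _
    simp
end

section
/- Let a_1,…,a_n be distinct nonzero real numbers, let p_n(x) = ∏_{j=1}^n (x − a_j), and let p^σ_{n+1}, p^σ_n, p^σ_{n−1} be polynomials of degrees n+1, n, n−1 respectively, with p^σ_{n+1} monic, and λ_n, λ_{n−1} real numbers such that p^σ_{n+1}(x) = x p_n(x) − λ_n p^σ_n(x) − λ_{n−1} p^σ_{n−1}(x). Then for every (x_1,…,x_{n+2}) ∈ ℝ^{n+2}: P_{n+2}(x_1,…,x_{n+2}) − J^{σ,a}_{n+2}(x_1,…,x_{n+1}) = ((−1)^{n+1}/(n+2)) ( L(p^σ_{n+1})(x_1,…,x_{n+2}) + λ_n L(p^σ_n)(x_1,…,x_{n+1}) + λ_{n−1} L(p^σ_{n−1})(x_1,…,x_n) ). -/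
lemma KS_congr {A : Type*} [CommRing A] [Algebra ℚ A] (x x' : ℕ → A) :
    ∀ m, (∀ k, k ≤ m → x k = x' k) → KS x m = KS x' m := by
  intro m
  induction m using Nat.strong_induction_on with
  | _ m ih =>
    match m with
    | 0 => intro _; rw [KS, KS]
    | m + 1 =>
      intro h
      rw [KS, KS]
      congr 1
      refine Finset.sum_congr rfl fun j hj => ?_
      simp only [Finset.mem_range] at hj
      rw [ih (m - j) (by omega) (fun k hk => h k (by omega)), h (j + 1) (by omega)]

/-- Let `a₁,…,aₙ` be distinct nonzero reals, `pₙ(x) = ∏_j (x − a_j)`, and let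
`q₁, q₂, q₃` be polynomials of degrees `n+1, n, n−1` with `q₁` monic and
`q₁(x) = x pₙ(x) − λₙ q₂(x) − λₙ₋₁ q₃(x)`. Then, with `(y_j)` solving
`x_k = Σ_j a_j^k y_j` (`k = 2,…,n+1`), `u^σ_{n+2} = Σ_j a_j^{n+2} y_j` and
`J^{σ,a}_{n+2}(x₁,…,x_{n+1}) = P_{n+2}(x₁,…,x_{n+1},u^σ_{n+2})`:
`P_{n+2}(x₁,…,x_{n+2}) − J^{σ,a}_{n+2}(x₁,…,x_{n+1})
  = ((−1)^{n+1}/(n+2)) (L(q₁)(x₁,…,x_{n+2}) + λₙ L(q₂)(x₁,…,x_{n+1})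
      + λₙ₋₁ L(q₃)(x₁,…,xₙ))`. -/
theorem kailathSegall_minus_J_teugels (n : ℕ) (hn : 1 ≤ n) (a : Fin n → ℝ)
    (ha : Function.Injective a) (ha0 : ∀ j, a j ≠ 0)
    (q1 q2 q3 : Polynomial ℝ) (hq1m : q1.Monic)
    (hq1 : q1.natDegree = n + 1) (hq2 : q2.natDegree = n) (hq3 : q3.natDegree = n - 1)
    (l1 l2 : ℝ)
    (hrel : q1 = Polynomial.X * (∏ j, (Polynomial.X - Polynomial.C (a j))) -
      Polynomial.C l1 * q2 - Polynomial.C l2 * q3) :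
    ∀ x : ℕ → ℝ, ∀ y : Fin n → ℝ,
      (∀ k, 2 ≤ k → k ≤ n + 1 → x k = ∑ j, a j ^ k * y j) →
      KS x (n + 2) -
          KS (fun k => if k = n + 2 then ∑ j, a j ^ (n + 2) * y j else x k) (n + 2) =
        ((-1 : ℝ) ^ (n + 1) / (n + 2)) *
          (Lpoly q1 x + l1 * Lpoly q2 x + l2 * Lpoly q3 x) := by
  intro x y hxy
  set p : Polynomial ℝ := ∏ j, (Polynomial.X - Polynomial.C (a j)) with hp
  have hpm : p.Monic := Polynomial.monic_prod_of_monic _ _ fun j _ => Polynomial.monic_X_sub_C _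
  have hpd : p.natDegree = n := by
    rw [hp, Polynomial.natDegree_prod_of_monic _ _ fun j _ => Polynomial.monic_X_sub_C _]
    simp
  set u : ℝ := ∑ j, a j ^ (n + 2) * y j with hu
  set x' : ℕ → ℝ := fun k => if k = n + 2 then u else x k with hx'
  -- coefficients facts
  have hq2' : q2.coeff (n + 1) = 0 := Polynomial.coeff_eq_zero_of_natDegree_lt (by omega)
  have hq3a : q3.coeff n = 0 := Polynomial.coeff_eq_zero_of_natDegree_lt (by omega)
  have hq3b : q3.coeff (n + 1) = 0 := Polynomial.coeff_eq_zero_of_natDegree_lt (by omega)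
  have hpc : p.coeff n = 1 := by
    have := hpm.coeff_natDegree
    rwa [hpd] at this
  -- Left-hand side
  have hL : KS x (n + 2) - KS x' (n + 2)
      = ((((n : ℚ) + 1) + 1)⁻¹) • ((-1 : ℝ) ^ (n + 1) * (x (n + 2) - u)) := by
    rw [show n + 2 = n + 1 + 1 from rfl, KS, KS, ← smul_sub, ← Finset.sum_sub_distrib]
    congr 1
    · push_cast; ring
    rw [Finset.sum_range_succ]
    have hz : ∀ j ∈ Finset.range (n + 1),
        ((-1 : ℝ) ^ j * KS x (n + 1 - j) * x (j + 1)
          - (-1 : ℝ) ^ j * KS x' (n + 1 - j) * x' (j + 1)) = 0 := by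
      intro j hj
      simp only [Finset.mem_range] at hj
      have h1 : KS x (n + 1 - j) = KS x' (n + 1 - j) :=
        KS_congr x x' _ (fun k hk => by simp [hx', show k ≠ n + 2 by omega])
      have h2 : x' (j + 1) = x (j + 1) := by simp [hx', show j + 1 ≠ n + 2 by omega, show j ≠ n + 1 by omega]
      rw [h1, h2]; ring
    rw [Finset.sum_eq_zero hz]
    have hx'u : x' (n + 1 + 1) = u := by simp [hx']
    have hks0 : ∀ z : ℕ → ℝ, KS z 0 = 1 := fun z => by rw [KS]
    rw [hx'u, show n + 1 - (n + 1) = 0 from by omega, hks0, hks0]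
    ring
  -- polynomial coefficient identity
  have hc : ∀ i, (Polynomial.X * p).coeff i * x (i + 1)
      = q1.coeff i * x (i + 1) + l1 * (q2.coeff i * x (i + 1)) + l2 * (q3.coeff i * x (i + 1)) := by
    intro i
    have : (Polynomial.X * p).coeff i = q1.coeff i + l1 * q2.coeff i + l2 * q3.coeff i := by
      rw [hrel]
      simp [Polynomial.coeff_sub, Polynomial.coeff_C_mul]
      ring
    rw [this]; ring
  have hq2L : ∑ i ∈ Finset.range (n + 1 + 1), q2.coeff i * x (i + 1) = Lpoly q2 x := by
    rw [Finset.sum_range_succ, hq2', Lpoly, hq2]; ring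
  have hq3L : ∑ i ∈ Finset.range (n + 1 + 1), q3.coeff i * x (i + 1) = Lpoly q3 x := by
    rw [Finset.sum_range_succ, Finset.sum_range_succ, hq3b, hq3a, Lpoly, hq3,
      show n - 1 + 1 = n from by omega]
    ring
  have hsum : Lpoly q1 x + l1 * Lpoly q2 x + l2 * Lpoly q3 x
      = ∑ i ∈ Finset.range (n + 1 + 1), (Polynomial.X * p).coeff i * x (i + 1) := by
    simp only [hc]
    rw [Finset.sum_add_distrib, Finset.sum_add_distrib, ← Finset.mul_sum, ← Finset.mul_sum,
      hq2L, hq3L, Lpoly, hq1]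
  -- evaluate the X*p sum
  have hXp : ∑ i ∈ Finset.range (n + 1 + 1), (Polynomial.X * p).coeff i * x (i + 1)
      = x (n + 2) - u := by
    rw [Finset.sum_range_succ']
    have h0 : (Polynomial.X * p).coeff 0 = 0 := by
      simp [Polynomial.mul_coeff_zero]
    simp only [Polynomial.coeff_X_mul, h0, zero_mul, add_zero]
    rw [Finset.sum_range_succ, hpc]
    have hx2 : ∀ i ∈ Finset.range n,
        p.coeff i * x (i + 1 + 1) = ∑ j, p.coeff i * (a j ^ (i + 2) * y j) := by
      intro i hi
      simp only [Finset.mem_range] at hi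
      rw [show i + 1 + 1 = i + 2 from rfl, hxy (i + 2) (by omega) (by omega), Finset.mul_sum]
    rw [Finset.sum_congr rfl hx2, Finset.sum_comm]
    have hj : ∀ j : Fin n, ∑ i ∈ Finset.range n, p.coeff i * (a j ^ (i + 2) * y j)
        = -(a j ^ (n + 2) * y j) := by
      intro j
      have hev : p.eval (a j) = 0 := by
        rw [hp, Polynomial.eval_prod]
        exact Finset.prod_eq_zero (Finset.mem_univ j) (by simp)
      have he := Polynomial.eval_eq_sum_range (p := p) (a j)
      rw [hpd, Finset.sum_range_succ, hpc, hev] at he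
      have hs : ∑ i ∈ Finset.range n, p.coeff i * a j ^ i = -(a j ^ n) := by linarith
      have hfac : ∑ i ∈ Finset.range n, p.coeff i * (a j ^ (i + 2) * y j)
          = (∑ i ∈ Finset.range n, p.coeff i * a j ^ i) * (a j ^ 2 * y j) := by
        rw [Finset.sum_mul]
        exact Finset.sum_congr rfl fun i _ => by ring
      rw [hfac, hs]
      ring
    rw [Finset.sum_congr rfl fun j _ => hj j, Finset.sum_neg_distrib, ← hu]
    show -u + 1 * x (n + 2) = x (n + 2) - u
    ring
  rw [hL, hsum, hXp, Rat.smul_def]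
  push_cast
  ring
end
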